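/- arXiv:1709.02625 — 5 statements merged into one kernel-verified Lean document; each statement's English description precedes it below -/
import Mathlib

section
/- Let A and B be n×n complex Hermitian matrices, c ∈ ℂⁿ, and d ∈ ℝ. Assume the strict feasibility (Slater) condition: there exists x₀ ∈ ℂⁿ with x₀ᴴ B x₀ < 1. Then the following two conditions are equivalent: (i) for every x ∈ ℂⁿ with xᴴ B x ≤ 1 one has xᴴ A x + 2·Re(cᴴ x) + d ≥ 0; (ii) there exists λ ≥ 0 such that the (n+1)×(n+1) block Hermitian matrix [[A + λB, c], [cᴴ, d − λ]] is positive semidefinite. -/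
open Matrix ComplexOrder

section SLemmaAuxSection
variable {ι : Type*} [Fintype ι] [DecidableEq ι]
namespace SLemmaAux

lemma herm_conj {C : Matrix ι ι ℂ} (hC : C.IsHermitian) (x y : ι → ℂ) :
    (starRingEnd ℂ) (star x ⬝ᵥ C *ᵥ y) = star y ⬝ᵥ C *ᵥ x := by
  have : star (star x ⬝ᵥ C *ᵥ y) = star (C *ᵥ y) ⬝ᵥ x := by
    rw [star_dotProduct]; simp
  rw [← Complex.star_def, this, star_mulVec, ← dotProduct_mulVec, hC.eq]

lemma herm_im {C : Matrix ι ι ℂ} (hC : C.IsHermitian) (z : ι → ℂ) :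
    (star z ⬝ᵥ C *ᵥ z).im = 0 := by
  have h := congrArg Complex.im (herm_conj hC z z)
  simp only [Complex.conj_im] at h
  linarith

lemma quad_add (C : Matrix ι ι ℂ) (x y : ι → ℂ) :
    star (x + y) ⬝ᵥ C *ᵥ (x + y) =
      star x ⬝ᵥ C *ᵥ x + star x ⬝ᵥ C *ᵥ y + star y ⬝ᵥ C *ᵥ x + star y ⬝ᵥ C *ᵥ y := by
  simp [star_add, add_dotProduct, dotProduct_add, mulVec_add]; ring

lemma smul_sesq (C : Matrix ι ι ℂ) (a b : ℂ) (x y : ι → ℂ) :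
    star (a • x) ⬝ᵥ C *ᵥ (b • y) = (starRingEnd ℂ) a * b * (star x ⬝ᵥ C *ᵥ y) := by
  simp [star_smul, smul_dotProduct, dotProduct_smul, mulVec_smul, smul_eq_mul]
  ring

lemma sesq_smul_right (C : Matrix ι ι ℂ) (b : ℂ) (x y : ι → ℂ) :
    star x ⬝ᵥ C *ᵥ (b • y) = b * (star x ⬝ᵥ C *ᵥ y) := by
  simp [mulVec_smul, dotProduct_smul, smul_eq_mul]

lemma sesq_smul_left (C : Matrix ι ι ℂ) (a : ℂ) (x y : ι → ℂ) :
    star (a • x) ⬝ᵥ C *ᵥ y = (starRingEnd ℂ) a * (star x ⬝ᵥ C *ᵥ y) := by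
  simp [star_smul, smul_dotProduct, smul_eq_mul, Complex.star_def]

lemma smul_dot (a b : ℂ) (x y : ι → ℂ) :
    star (a • x) ⬝ᵥ (b • y) = (starRingEnd ℂ) a * b * (star x ⬝ᵥ y) := by
  simp [star_smul, smul_dotProduct, dotProduct_smul, smul_eq_mul]
  ring

lemma self_dot_eq (v : ι → ℂ) :
    star v ⬝ᵥ v = (((star v ⬝ᵥ v).re : ℝ) : ℂ) := by
  have : star v ⬝ᵥ v = ((∑ i, Complex.normSq (v i) : ℝ) : ℂ) := by
    rw [dotProduct]
    push_cast
    exact Finset.sum_congr rfl fun i _ => by simp [Complex.normSq_eq_conj_mul_self]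
  rw [this]; simp

lemma self_dot_re_nonneg (v : ι → ℂ) : 0 ≤ (star v ⬝ᵥ v).re := by
  have : star v ⬝ᵥ v = ((∑ i, Complex.normSq (v i) : ℝ) : ℂ) := by
    rw [dotProduct]
    push_cast
    exact Finset.sum_congr rfl fun i _ => by simp [Complex.normSq_eq_conj_mul_self]
  rw [this]
  simpa using Finset.sum_nonneg fun i (_ : i ∈ Finset.univ) => Complex.normSq_nonneg (v i)

lemma self_dot_re_eq_zero {v : ι → ℂ} (h : (star v ⬝ᵥ v).re = 0) : v = 0 := by
  have h1 : star v ⬝ᵥ v = 0 := by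
    rw [self_dot_eq v, h]; simp
  have h2 : ∀ i, Complex.normSq (v i) = 0 := by
    have : star v ⬝ᵥ v = ((∑ i, Complex.normSq (v i) : ℝ) : ℂ) := by
      rw [dotProduct]
      push_cast
      exact Finset.sum_congr rfl fun i _ => by simp [Complex.normSq_eq_conj_mul_self]
    rw [this] at h1
    have hsum : (∑ i, Complex.normSq (v i) : ℝ) = 0 := by exact_mod_cast h1
    intro i
    have := (Finset.sum_eq_zero_iff_of_nonneg
      (fun j (_ : j ∈ Finset.univ) => Complex.normSq_nonneg (v j))).mp hsum i (Finset.mem_univ i)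
    exact this
  funext i
  simpa [Complex.normSq_eq_zero] using h2 i

lemma exists_phase (a b : ℂ) :
    ∃ ω : ℂ, Complex.normSq ω = 1 ∧ (ω * a + (starRingEnd ℂ) ω * b).im = 0 := by
  set ψ : ℝ → ℝ := fun φ =>
    (Complex.exp (φ * Complex.I) * a + Complex.exp (-(φ * Complex.I)) * b).im with hψ
  have hcont : Continuous ψ := by
    apply Complex.continuous_im.comp
    fun_prop
  have hπ : ψ Real.pi = -ψ 0 := by
    simp [hψ, Complex.exp_neg, Complex.exp_pi_mul_I]; ring
  have main : ∃ φ : ℝ, ψ φ = 0 := by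
    rcases le_total (ψ 0) 0 with h | h
    · have h0 : (0:ℝ) ∈ Set.Icc (ψ 0) (ψ Real.pi) := ⟨h, by rw [hπ]; linarith⟩
      obtain ⟨φ, _, hφ⟩ := intermediate_value_Icc Real.pi_nonneg hcont.continuousOn h0
      exact ⟨φ, hφ⟩
    · have h0 : (0:ℝ) ∈ Set.Icc (ψ Real.pi) (ψ 0) := ⟨by rw [hπ]; linarith, h⟩
      obtain ⟨φ, _, hφ⟩ := intermediate_value_Icc' Real.pi_nonneg hcont.continuousOn h0
      exact ⟨φ, hφ⟩
  obtain ⟨φ, hφ⟩ := main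
  refine ⟨Complex.exp (φ * Complex.I), ?_, ?_⟩
  · have := Complex.norm_exp_ofReal_mul_I φ
    rw [← Complex.sq_norm, this]; norm_num
  · have hc : (starRingEnd ℂ) (Complex.exp (φ * Complex.I)) = Complex.exp (-(φ * Complex.I)) := by
      rw [← Complex.exp_conj]
      congr 1
      simp [Complex.conj_I, mul_comm]
    rw [hc]
    exact hφ

lemma key (C : Matrix ι ι ℂ) {z w : ι → ℂ}
    (hz : star z ⬝ᵥ z = 1) (hw : star w ⬝ᵥ w = 1)
    (h0 : star z ⬝ᵥ C *ᵥ z = 0) (h1 : star w ⬝ᵥ C *ᵥ w = 1)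
    {t : ℝ} (ht : t ∈ Set.Icc (0:ℝ) 1) :
    ∃ u : ι → ℂ, star u ⬝ᵥ u = 1 ∧ star u ⬝ᵥ C *ᵥ u = (t : ℂ) := by
  obtain ⟨ω, hω, him⟩ := exists_phase (star z ⬝ᵥ C *ᵥ w) (star w ⬝ᵥ C *ᵥ z)
  have hωc : (starRingEnd ℂ) ω * ω = 1 := by
    rw [← Complex.normSq_eq_conj_mul_self, hω]; norm_num
  set w' : ι → ℂ := ω • w with hw'def
  have hw'1 : star w' ⬝ᵥ w' = 1 := by rw [hw'def, smul_dot, hw, hωc, mul_one]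
  have hw'C : star w' ⬝ᵥ C *ᵥ w' = 1 := by rw [hw'def, smul_sesq, h1, hωc, mul_one]
  have hzw' : star z ⬝ᵥ C *ᵥ w' = ω * (star z ⬝ᵥ C *ᵥ w) := by
    rw [hw'def, sesq_smul_right]
  have hw'z : star w' ⬝ᵥ C *ᵥ z = (starRingEnd ℂ) ω * (star w ⬝ᵥ C *ᵥ z) := by
    rw [hw'def, sesq_smul_left]
  set e : ℂ := star z ⬝ᵥ C *ᵥ w' + star w' ⬝ᵥ C *ᵥ z with he
  have heim : e.im = 0 := by rw [he, hzw', hw'z]; exact him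
  set e2 : ℂ := star z ⬝ᵥ w' + star w' ⬝ᵥ z with he2
  have he2im : e2.im = 0 := by
    have hsw : star w' ⬝ᵥ z = star (star z ⬝ᵥ w') := by rw [star_dotProduct]
    rw [he2, hsw]
    simp
  set v : ℝ → (ι → ℂ) := fun s => ((1 - s : ℝ) : ℂ) • z + ((s : ℝ) : ℂ) • w' with hv
  have hq : ∀ s : ℝ, star (v s) ⬝ᵥ C *ᵥ (v s)
      = ((s^2 : ℝ) : ℂ) + (((1-s)*s : ℝ) : ℂ) * e := by
    intro s
    rw [hv]
    simp only [quad_add, smul_sesq, h0, h1, hw'C, he]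
    rw [Complex.conj_ofReal, Complex.conj_ofReal]
    push_cast
    ring
  have hn : ∀ s : ℝ, star (v s) ⬝ᵥ (v s)
      = (((1-s)^2 : ℝ) : ℂ) + ((s^2 : ℝ) : ℂ) + (((1-s)*s : ℝ) : ℂ) * e2 := by
    intro s
    rw [hv]
    simp only [star_add, add_dotProduct, dotProduct_add, smul_dot, hz, hw'1, he2]
    rw [Complex.conj_ofReal, Complex.conj_ofReal]
    push_cast
    ring
  set Qre : ℝ → ℝ := fun s => s^2 + (1-s)*s * e.re with hQre
  set Nre : ℝ → ℝ := fun s => (1-s)^2 + s^2 + (1-s)*s * e2.re with hNre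
  have hqre : ∀ s, (star (v s) ⬝ᵥ C *ᵥ (v s)).re = Qre s := by
    intro s
    rw [hq s, Complex.add_re, Complex.ofReal_re, Complex.re_ofReal_mul]
  have hqim : ∀ s, (star (v s) ⬝ᵥ C *ᵥ (v s)).im = 0 := by
    intro s
    rw [hq s, Complex.add_im, Complex.ofReal_im, Complex.im_ofReal_mul, heim]
    ring
  have hnre : ∀ s, (star (v s) ⬝ᵥ (v s)).re = Nre s := by
    intro s
    rw [hn s, Complex.add_re, Complex.add_re, Complex.ofReal_re, Complex.ofReal_re,
      Complex.re_ofReal_mul]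
  have hNnn : ∀ s, 0 ≤ Nre s := fun s => (hnre s) ▸ self_dot_re_nonneg (v s)
  have hNne : ∀ s, Nre s ≠ 0 := by
    intro s hsz
    have hv0 : v s = 0 := self_dot_re_eq_zero ((hnre s).symm ▸ hsz)
    have heq : ((1 - s : ℝ) : ℂ) • z = -(((s : ℝ) : ℂ) • w') := by
      rw [hv] at hv0
      exact add_eq_zero_iff_eq_neg.mp hv0
    have h2 : (0:ℂ) = ((s:ℂ))^2 := by
      have l := congrArg (fun y => star y ⬝ᵥ C *ᵥ y) heq
      rw [smul_sesq, h0, mul_zero] at l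
      rw [show -(((s : ℝ):ℂ) • w') = ((-s : ℝ):ℂ) • w' by push_cast; rw [neg_smul]] at l
      rw [smul_sesq, hw'C, Complex.conj_ofReal] at l
      push_cast at l
      linear_combination l
    have hs0 : s = 0 := by
      have hsq : ((s:ℂ))^2 = 0 := h2.symm
      have := pow_eq_zero_iff (n := 2) (by norm_num) |>.mp hsq
      exact_mod_cast this
    rw [hs0, hv] at hv0
    simp at hv0
    rw [hv0] at hz
    simp at hz
  have hNpos : ∀ s, 0 < Nre s := fun s => lt_of_le_of_ne (hNnn s) (Ne.symm (hNne s))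
  have hgc : ContinuousOn (fun s => Qre s / Nre s) (Set.Icc (0:ℝ) 1) := by
    apply ContinuousOn.div
    · rw [hQre]; fun_prop
    · rw [hNre]; fun_prop
    · exact fun s _ => hNne s
  have hg0 : Qre 0 / Nre 0 = 0 := by simp [hQre]
  have hg1 : Qre 1 / Nre 1 = 1 := by simp [hQre, hNre]
  have htmem : t ∈ Set.Icc (Qre 0 / Nre 0) (Qre 1 / Nre 1) := by rw [hg0, hg1]; exact ht
  obtain ⟨s, _, hs⟩ := intermediate_value_Icc zero_le_one hgc htmem
  set r : ℝ := Real.sqrt (Nre s) with hr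
  have hrpos : 0 < r := Real.sqrt_pos.mpr (hNpos s)
  have hr2 : r^2 = Nre s := Real.sq_sqrt (hNnn s)
  have hrne : r ≠ 0 := ne_of_gt hrpos
  refine ⟨((r⁻¹ : ℝ) : ℂ) • v s, ?_, ?_⟩
  · rw [smul_dot, Complex.conj_ofReal, self_dot_eq (v s), hnre s]
    norm_cast
    rw [← hr2]
    field_simp
  · have hqs : star (v s) ⬝ᵥ C *ᵥ (v s) = ((Qre s : ℝ) : ℂ) := by
      apply Complex.ext
      · rw [hqre s]; simp
      · rw [hqim s]; simp
    rw [smul_sesq, Complex.conj_ofReal, hqs]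
    norm_cast
    rw [← hs]
    show r⁻¹ * r⁻¹ * Qre s = Qre s / Nre s
    rw [← hr2]
    ring

lemma unit_convex (C : Matrix ι ι ℂ) {z w : ι → ℂ}
    (hz : star z ⬝ᵥ z = 1) (hw : star w ⬝ᵥ w = 1)
    {t : ℝ} (ht : t ∈ Set.Icc (0:ℝ) 1) :
    ∃ u : ι → ℂ, star u ⬝ᵥ u = 1 ∧
      star u ⬝ᵥ C *ᵥ u
        = ((1 - t : ℝ) : ℂ) * (star z ⬝ᵥ C *ᵥ z) + ((t : ℝ) : ℂ) * (star w ⬝ᵥ C *ᵥ w) := by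
  set p : ℂ := star z ⬝ᵥ C *ᵥ z with hp
  set q : ℂ := star w ⬝ᵥ C *ᵥ w with hqq
  by_cases hpq : p = q
  · refine ⟨z, hz, ?_⟩
    rw [← hp, ← hpq]
    push_cast
    ring
  · have hδ : q - p ≠ 0 := sub_ne_zero.mpr (Ne.symm hpq)
    set δ : ℂ := q - p with hδdef
    set C' : Matrix ι ι ℂ := δ⁻¹ • (C - p • (1 : Matrix ι ι ℂ)) with hC'
    have aux : ∀ x : ι → ℂ, star x ⬝ᵥ C' *ᵥ x
        = δ⁻¹ * (star x ⬝ᵥ C *ᵥ x - p * (star x ⬝ᵥ x)) := by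
      intro x
      rw [hC', smul_mulVec, dotProduct_smul, smul_eq_mul, sub_mulVec,
        dotProduct_sub, smul_mulVec, one_mulVec, dotProduct_smul, smul_eq_mul]
    have h0 : star z ⬝ᵥ C' *ᵥ z = 0 := by rw [aux, hz, ← hp]; ring
    have h1 : star w ⬝ᵥ C' *ᵥ w = 1 := by
      rw [aux, hw, ← hqq, mul_one, hδdef]
      exact inv_mul_cancel₀ hδ
    obtain ⟨u, hu1, huv⟩ := key C' hz hw h0 h1 ht
    refine ⟨u, hu1, ?_⟩
    have := aux u
    rw [huv, hu1, mul_one] at this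
    have h2 : star u ⬝ᵥ C *ᵥ u = (t : ℂ) * δ + p := by
      have h3 := congrArg (fun y => δ * y) this
      rw [← mul_assoc, mul_inv_cancel₀ hδ, one_mul] at h3
      linear_combination -h3
    rw [h2, hδdef]
    push_cast
    ring

lemma quadRange_convex (C : Matrix ι ι ℂ) :
    Convex ℝ {p : ℂ | ∃ z : ι → ℂ, star z ⬝ᵥ C *ᵥ z = p} := by
  rintro P ⟨z, rfl⟩ Q ⟨w, rfl⟩ α β hα hβ hαβ
  simp only [Set.mem_setOf_eq, Complex.real_smul]
  set nz : ℝ := (star z ⬝ᵥ z).re with hnz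
  set nw : ℝ := (star w ⬝ᵥ w).re with hnw
  have hsm : ∀ (r : ℝ) (x : ι → ℂ), 0 ≤ r →
      star ((Real.sqrt r : ℂ) • x) ⬝ᵥ C *ᵥ ((Real.sqrt r : ℂ) • x)
        = (r : ℂ) * (star x ⬝ᵥ C *ᵥ x) := by
    intro r x hr
    rw [smul_sesq, Complex.conj_ofReal, ← Complex.ofReal_mul,
      Real.mul_self_sqrt hr]
  by_cases hz0 : nz = 0
  · have hzz : z = 0 := self_dot_re_eq_zero (hnz ▸ hz0)
    refine ⟨(Real.sqrt β : ℂ) • w, ?_⟩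
    rw [hsm β w hβ, hzz]
    simp
  by_cases hw0 : nw = 0
  · have hww : w = 0 := self_dot_re_eq_zero (hnw ▸ hw0)
    refine ⟨(Real.sqrt α : ℂ) • z, ?_⟩
    rw [hsm α z hα, hww]
    simp
  · have hznn := self_dot_re_nonneg z
    have hwnn := self_dot_re_nonneg w
    have hzpos : 0 < nz := lt_of_le_of_ne (hnz ▸ hznn) (Ne.symm hz0)
    have hwpos : 0 < nw := lt_of_le_of_ne (hnw ▸ hwnn) (Ne.symm hw0)
    set z' : ι → ℂ := (((Real.sqrt nz)⁻¹ : ℝ) : ℂ) • z with hz'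
    set w' : ι → ℂ := (((Real.sqrt nw)⁻¹ : ℝ) : ℂ) • w with hw'
    have hzd : star z ⬝ᵥ z = ((nz : ℝ) : ℂ) := by rw [self_dot_eq z, ← hnz]
    have hwd : star w ⬝ᵥ w = ((nw : ℝ) : ℂ) := by rw [self_dot_eq w, ← hnw]
    have hz'1 : star z' ⬝ᵥ z' = 1 := by
      rw [hz', smul_dot, Complex.conj_ofReal, hzd, ← Complex.ofReal_mul, ← Complex.ofReal_mul]
      norm_cast
      rw [← Real.sqrt_inv, Real.mul_self_sqrt (by positivity)]
      field_simp
    have hw'1 : star w' ⬝ᵥ w' = 1 := by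
      rw [hw', smul_dot, Complex.conj_ofReal, hwd, ← Complex.ofReal_mul, ← Complex.ofReal_mul]
      norm_cast
      rw [← Real.sqrt_inv, Real.mul_self_sqrt (by positivity)]
      field_simp
    have hz'v : star z' ⬝ᵥ C *ᵥ z' = ((nz⁻¹ : ℝ) : ℂ) * (star z ⬝ᵥ C *ᵥ z) := by
      rw [hz', smul_sesq, Complex.conj_ofReal, ← Complex.ofReal_mul, ← Real.sqrt_inv,
        Real.mul_self_sqrt (by positivity)]
    have hw'v : star w' ⬝ᵥ C *ᵥ w' = ((nw⁻¹ : ℝ) : ℂ) * (star w ⬝ᵥ C *ᵥ w) := by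
      rw [hw', smul_sesq, Complex.conj_ofReal, ← Complex.ofReal_mul, ← Real.sqrt_inv,
        Real.mul_self_sqrt (by positivity)]
    set r : ℝ := α * nz + β * nw with hrdef
    have hrpos : 0 < r := by
      rcases lt_or_ge 0 α with h | h
      · have : 0 < α * nz := mul_pos h hzpos
        nlinarith [mul_nonneg hβ hwpos.le]
      · have hβ1 : β > 0 := by nlinarith
        nlinarith [mul_nonneg hα hzpos.le, mul_pos hβ1 hwpos]
    set t : ℝ := β * nw / r with htdef
    have ht0 : 0 ≤ t := div_nonneg (mul_nonneg hβ hwpos.le) hrpos.le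
    have ht1 : t ≤ 1 := by
      rw [htdef, div_le_one hrpos]
      nlinarith [mul_nonneg hα hzpos.le]
    obtain ⟨u, hu1, huval⟩ := unit_convex C hz'1 hw'1 (t := t) ⟨ht0, ht1⟩
    refine ⟨(Real.sqrt r : ℂ) • u, ?_⟩
    rw [hsm r u hrpos.le, huval, hz'v, hw'v]
    have e1 : r * ((1 - t) * nz⁻¹) = α := by
      rw [htdef]
      field_simp
      ring
    have e2 : r * (t * nw⁻¹) = β := by
      rw [htdef]
      field_simp
    calc (r:ℂ) * (((1 - t : ℝ):ℂ) * (((nz⁻¹:ℝ):ℂ) * (star z ⬝ᵥ C *ᵥ z))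
            + ((t:ℝ):ℂ) * (((nw⁻¹:ℝ):ℂ) * (star w ⬝ᵥ C *ᵥ w)))
        = ((r * ((1-t) * nz⁻¹) : ℝ):ℂ) * (star z ⬝ᵥ C *ᵥ z)
            + ((r * (t * nw⁻¹) : ℝ):ℂ) * (star w ⬝ᵥ C *ᵥ w) := by push_cast; ring
      _ = (α:ℂ) * (star z ⬝ᵥ C *ᵥ z) + (β:ℂ) * (star w ⬝ᵥ C *ᵥ w) := by rw [e1, e2]

theorem homog_S_lemma (F G : Matrix ι ι ℂ) (hF : F.IsHermitian) (hG : G.IsHermitian)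
    (slater : ∃ z₀ : ι → ℂ, (star z₀ ⬝ᵥ G *ᵥ z₀).re < 0)
    (h : ∀ z : ι → ℂ, (star z ⬝ᵥ G *ᵥ z).re ≤ 0 → 0 ≤ (star z ⬝ᵥ F *ᵥ z).re) :
    ∃ lam : ℝ, 0 ≤ lam ∧ (F + (lam : ℂ) • G).PosSemidef := by
  set C : Matrix ι ι ℂ := F + Complex.I • G with hC
  have hval : ∀ z : ι → ℂ, star z ⬝ᵥ C *ᵥ z
      = star z ⬝ᵥ F *ᵥ z + Complex.I * (star z ⬝ᵥ G *ᵥ z) := by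
    intro z
    rw [hC, add_mulVec, dotProduct_add, smul_mulVec, dotProduct_smul, smul_eq_mul]
  have hre : ∀ z : ι → ℂ, (star z ⬝ᵥ C *ᵥ z).re = (star z ⬝ᵥ F *ᵥ z).re := by
    intro z; rw [hval]; simp [herm_im hG]
  have him : ∀ z : ι → ℂ, (star z ⬝ᵥ C *ᵥ z).im = (star z ⬝ᵥ G *ᵥ z).re := by
    intro z; rw [hval]; simp [herm_im hF]
  set D : Set ℂ := {p : ℂ | ∃ z : ι → ℂ, star z ⬝ᵥ C *ᵥ z = p} with hD
  have hDconv : Convex ℝ D := quadRange_convex C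
  set O : Set ℂ := Complex.reLm ⁻¹' (Set.Iio 0) ∩ Complex.imLm ⁻¹' (Set.Iio 0) with hO
  have hOmem : ∀ p : ℂ, p ∈ O ↔ p.re < 0 ∧ p.im < 0 := by
    intro p; simp [hO, Complex.reLm, Complex.imLm]
  have hOconv : Convex ℝ O :=
    ((convex_Iio (0:ℝ)).linear_preimage Complex.reLm).inter
      ((convex_Iio (0:ℝ)).linear_preimage Complex.imLm)
  have hOopen : IsOpen O :=
    ((isOpen_Iio).preimage Complex.continuous_re).inter
      ((isOpen_Iio).preimage Complex.continuous_im)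
  have hdisj : Disjoint O D := by
    rw [Set.disjoint_left]
    rintro p hpO ⟨z, rfl⟩
    rw [hOmem] at hpO
    obtain ⟨h1, h2⟩ := hpO
    rw [him z] at h2
    rw [hre z] at h1
    exact absurd (h z h2.le) (by linarith)
  obtain ⟨f, u, hfO, hfD⟩ := geometric_hahn_banach_open hOconv hOopen hDconv hdisj
  have h0D : (0 : ℂ) ∈ D := ⟨0, by simp⟩
  have hu0 : u ≤ 0 := by
    have := hfD 0 h0D
    simpa using this
  have hDscale : ∀ p ∈ D, ∀ r : ℝ, 0 ≤ r → (r : ℂ) * p ∈ D := by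
    rintro p ⟨z, rfl⟩ r hr
    exact ⟨(Real.sqrt r : ℂ) • z, by
      rw [smul_sesq, Complex.conj_ofReal, ← Complex.ofReal_mul, Real.mul_self_sqrt hr]⟩
  have hfD0 : ∀ p ∈ D, 0 ≤ f p := by
    intro p hp
    by_contra hneg
    push_neg at hneg
    set R : ℝ := (|u| + 1) / (-(f p)) with hR
    have hRpos : 0 < R := div_pos (by positivity) (by linarith)
    have hmem := hDscale p hp R hRpos.le
    have := hfD _ hmem
    have hsm' : f ((R:ℂ) * p) = R * f p := by
      rw [show (R:ℂ) * p = R • p by rw [Complex.real_smul], f.map_smul, smul_eq_mul]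
    rw [hsm'] at this
    have hfpR : R * f p = -(|u| + 1) := by
      rw [hR, div_mul_eq_mul_div, div_eq_iff (show -f p ≠ 0 by linarith)]
      ring
    rw [hfpR] at this
    have := abs_nonneg u
    have := neg_abs_le u
    linarith
  set α : ℝ := f 1 with hαdef
  set β : ℝ := f Complex.I with hβdef
  have hfw : ∀ p : ℂ, f p = p.re * α + p.im * β := by
    intro p
    have hdecomp : p = p.re • (1:ℂ) + p.im • Complex.I := by
      simp [Complex.real_smul, Complex.re_add_im]
    calc f p = f (p.re • (1:ℂ) + p.im • Complex.I) := by rw [← hdecomp]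
      _ = p.re • f 1 + p.im • f Complex.I := by
            rw [map_add, f.map_smul, f.map_smul]
      _ = p.re * α + p.im * β := by rw [smul_eq_mul, smul_eq_mul]
  have hαnn : 0 ≤ α := by
    by_contra hneg
    push_neg at hneg
    set ε : ℝ := -α / (2 * (|β| + 1)) with hε
    have hεpos : 0 < ε := by
      rw [hε]; apply div_pos (by linarith) (by positivity)
    have hmem : (-1 : ℂ) + (-ε : ℝ) • Complex.I ∈ O := by
      rw [hOmem]
      constructor <;> simp [Complex.real_smul] <;> linarith
    have hlt := hfO _ hmem
    rw [hfw] at hlt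
    simp [Complex.real_smul] at hlt
    have h2 : ε * β ≤ ε * |β| := by
      exact mul_le_mul_of_nonneg_left (le_abs_self β) hεpos.le
    have h3 : ε * |β| = -α * |β| / (2 * (|β| + 1)) := by rw [hε]; ring
    have h4 : -α * |β| / (2 * (|β| + 1)) ≤ -α / 2 := by
      rw [div_le_iff₀ (by positivity)]
      have := abs_nonneg β
      nlinarith
    linarith
  have hβnn : 0 ≤ β := by
    by_contra hneg
    push_neg at hneg
    set ε : ℝ := -β / (2 * (|α| + 1)) with hε
    have hεpos : 0 < ε := by
      rw [hε]; apply div_pos (by linarith) (by positivity)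
    have hmem : ((-ε : ℝ) : ℂ) + (-1 : ℝ) • Complex.I ∈ O := by
      rw [hOmem]
      constructor <;> simp [Complex.real_smul] <;> linarith
    have hlt := hfO _ hmem
    rw [hfw] at hlt
    simp [Complex.real_smul] at hlt
    have h2 : ε * α ≤ ε * |α| := mul_le_mul_of_nonneg_left (le_abs_self α) hεpos.le
    have h3 : ε * |α| = -β * |α| / (2 * (|α| + 1)) := by rw [hε]; ring
    have h4 : -β * |α| / (2 * (|α| + 1)) ≤ -β / 2 := by
      rw [div_le_iff₀ (by positivity)]
      have := abs_nonneg α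
      nlinarith
    linarith
  have hkey : ∀ z : ι → ℂ, 0 ≤ α * (star z ⬝ᵥ F *ᵥ z).re + β * (star z ⬝ᵥ G *ᵥ z).re := by
    intro z
    have hmem : star z ⬝ᵥ C *ᵥ z ∈ D := ⟨z, rfl⟩
    have := hfD0 _ hmem
    rw [hfw, hre z, him z] at this
    linarith
  have hαpos : 0 < α := by
    rcases lt_or_eq_of_le hαnn with h' | h'
    · exact h'
    · exfalso
      obtain ⟨z₀, hz₀⟩ := slater
      have hk := hkey z₀
      rw [← h'] at hk
      simp at hk
      have hβ0 : β = 0 := by nlinarith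
      have hmem : (-1 : ℂ) + (-1 : ℝ) • Complex.I ∈ O := by
        rw [hOmem]
        constructor <;> simp [Complex.real_smul]
      have hlt := hfO _ hmem
      rw [hfw] at hlt
      simp [Complex.real_smul, ← h', hβ0] at hlt
      linarith
  refine ⟨β / α, div_nonneg hβnn hαpos.le, Matrix.PosSemidef.of_dotProduct_mulVec_nonneg ?_ ?_⟩
  · show (F + ((β/α : ℝ):ℂ) • G).IsHermitian
    have : (F + ((β/α : ℝ):ℂ) • G)ᴴ = F + ((β/α : ℝ):ℂ) • G := by
      rw [conjTranspose_add, conjTranspose_smul, hF.eq, hG.eq, Complex.star_def,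
        Complex.conj_ofReal]
    exact this
  · intro x
    have hexp : star x ⬝ᵥ (F + ((β/α : ℝ):ℂ) • G) *ᵥ x
        = star x ⬝ᵥ F *ᵥ x + ((β/α : ℝ):ℂ) * (star x ⬝ᵥ G *ᵥ x) := by
      rw [add_mulVec, dotProduct_add, smul_mulVec, dotProduct_smul, smul_eq_mul]
    rw [hexp, Complex.le_def]
    constructor
    · simp only [Complex.zero_re, Complex.add_re, Complex.re_ofReal_mul]
      have hk := hkey x
      have hq : α * ((star x ⬝ᵥ F *ᵥ x).re + β / α * (star x ⬝ᵥ G *ᵥ x).re)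
          = α * (star x ⬝ᵥ F *ᵥ x).re + β * (star x ⬝ᵥ G *ᵥ x).re := by
        field_simp
      nlinarith
    · simp [Complex.add_im, Complex.im_ofReal_mul, herm_im hF, herm_im hG]

lemma lead_nonneg {a b e : ℝ} (H : ∀ s : ℝ, 0 ≤ s → 0 ≤ a * s ^ 2 + b * s + e) : 0 ≤ a := by
  by_contra hn
  push_neg at hn
  set T : ℝ := |b| + |e| + 1 with hT
  have hT1 : 1 ≤ T := by
    have := abs_nonneg b
    have := abs_nonneg e
    simp [hT]; linarith
  have hna : 0 < -a := by linarith
  set s : ℝ := T / -a + 1 with hs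
  have hs1 : 1 ≤ s := by
    have : 0 ≤ T / -a := div_nonneg (by linarith) hna.le
    simp [hs]; linarith
  have hs0 : 0 ≤ s := by linarith
  have hH := H s hs0
  have has : a * s = -T + a := by
    rw [hs]
    have ha0 : a ≠ 0 := hn.ne
    field_simp
  have expand : s * (a * s + |b| + |e|) = a * s ^ 2 + |b| * s + |e| * s := by ring
  have key : a * s ^ 2 + b * s + e ≤ s * (a * s + |b| + |e|) := by
    have h1 : b * s ≤ |b| * s := mul_le_mul_of_nonneg_right (le_abs_self b) hs0
    have h2 : e ≤ |e| * s := by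
      calc e ≤ |e| := le_abs_self e
        _ ≤ |e| * s := le_mul_of_one_le_right (abs_nonneg e) hs1
    linarith [expand]
  have hneg : a * s + |b| + |e| = a - 1 := by
    rw [has, hT]; ring
  rw [hneg] at key
  have hfin : s * (a - 1) ≤ 1 * (a - 1) :=
    mul_le_mul_of_nonpos_right hs1 (by linarith)
  linarith

end SLemmaAux


end SLemmaAuxSection

open SLemmaAux in
/-- The complex S-lemma (S-procedure) with one quadratic constraint. -/
theorem complex_S_lemma {n : ℕ} (A B : Matrix (Fin n) (Fin n) ℂ)
    (hA : A.IsHermitian) (hB : B.IsHermitian)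
    (c : Fin n → ℂ) (d : ℝ)
    (hSlater : ∃ x₀ : Fin n → ℂ, (star x₀ ⬝ᵥ B *ᵥ x₀).re < 1) :
    (∀ x : Fin n → ℂ, (star x ⬝ᵥ B *ᵥ x).re ≤ 1 →
        0 ≤ (star x ⬝ᵥ A *ᵥ x).re + 2 * (star c ⬝ᵥ x).re + d) ↔
      (∃ lam : ℝ, 0 ≤ lam ∧
        (Matrix.fromBlocks (A + (lam : ℂ) • B)
            (Matrix.of fun i (_ : Unit) => c i)
            (Matrix.of fun (_ : Unit) j => star (c j))
            (Matrix.of fun (_ : Unit) (_ : Unit) => ((d - lam : ℝ) : ℂ))).PosSemidef) := by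
  classical
  -- the homogenized matrices
  set F : Matrix (Fin n ⊕ Unit) (Fin n ⊕ Unit) ℂ :=
    Matrix.fromBlocks A (Matrix.of fun i (_ : Unit) => c i)
      (Matrix.of fun (_ : Unit) j => star (c j))
      (Matrix.of fun (_ : Unit) (_ : Unit) => ((d : ℝ) : ℂ)) with hFdef
  set G : Matrix (Fin n ⊕ Unit) (Fin n ⊕ Unit) ℂ :=
    Matrix.fromBlocks B (Matrix.of fun i (_ : Unit) => (0 : ℂ))
      (Matrix.of fun (_ : Unit) j => (0 : ℂ))
      (Matrix.of fun (_ : Unit) (_ : Unit) => ((-1 : ℝ) : ℂ)) with hGdef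
  -- generic quadratic form of such a block matrix
  have block_form : ∀ (M : Matrix (Fin n) (Fin n) ℂ) (cc : Fin n → ℂ) (dd : ℂ)
      (x : Fin n → ℂ) (τ : ℂ),
      star (Sum.elim x (fun _ : Unit => τ)) ⬝ᵥ
        (Matrix.fromBlocks M (Matrix.of fun i (_ : Unit) => cc i)
          (Matrix.of fun (_ : Unit) j => star (cc j))
          (Matrix.of fun (_ : Unit) (_ : Unit) => dd)) *ᵥ (Sum.elim x fun _ => τ)
      = star x ⬝ᵥ M *ᵥ x + τ * (star x ⬝ᵥ cc) + star τ * (star cc ⬝ᵥ x) + star τ * dd * τ := by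
    intro M cc dd x τ
    have hstar : star (Sum.elim x (fun _ : Unit => τ))
        = Sum.elim (star x) (fun _ : Unit => star τ) := by
      funext i; cases i <;> rfl
    have hcomp1 : (Sum.elim x (fun _ : Unit => τ)) ∘ Sum.inl = x := rfl
    have hcomp2 : (Sum.elim x (fun _ : Unit => τ)) ∘ Sum.inr = fun _ => τ := rfl
    rw [hstar, Matrix.fromBlocks_mulVec, hcomp1, hcomp2, sumElim_dotProduct_sumElim]
    have e1 : (Matrix.of fun i (_ : Unit) => cc i) *ᵥ (fun _ => τ) = τ • cc := by
      funext i
      simp [Matrix.mulVec, dotProduct, mul_comm]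
    have e2 : (Matrix.of fun (_ : Unit) j => star (cc j)) *ᵥ x = fun _ => star cc ⬝ᵥ x := by
      funext i
      simp [Matrix.mulVec, dotProduct]
    have e3 : (Matrix.of fun (_ : Unit) (_ : Unit) => dd) *ᵥ (fun _ => τ) = fun _ => dd * τ := by
      funext i
      simp [Matrix.mulVec, dotProduct]
    rw [e1, e2, e3, dotProduct_add, dotProduct_add, dotProduct_smul, smul_eq_mul]
    have e4 : (fun (_ : Unit) => star τ) ⬝ᵥ (fun _ => star cc ⬝ᵥ x) = star τ * (star cc ⬝ᵥ x) := by
      simp [dotProduct]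
    have e5 : (fun (_ : Unit) => star τ) ⬝ᵥ (fun _ => dd * τ) = star τ * (dd * τ) := by
      simp [dotProduct]
    rw [e4, e5]
    ring
  -- real part of the generic form, for Hermitian M and real dd
  have re_form : ∀ (M : Matrix (Fin n) (Fin n) ℂ), M.IsHermitian → ∀ (cc : Fin n → ℂ) (dd : ℝ)
      (x : Fin n → ℂ) (τ : ℂ),
      (star x ⬝ᵥ M *ᵥ x + τ * (star x ⬝ᵥ cc) + star τ * (star cc ⬝ᵥ x)
        + star τ * ((dd : ℝ) : ℂ) * τ).re
      = (star x ⬝ᵥ M *ᵥ x).re + 2 * ((starRingEnd ℂ) τ * (star cc ⬝ᵥ x)).re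
        + dd * Complex.normSq τ := by
    intro M hM cc dd x τ
    have h1 : τ * (star x ⬝ᵥ cc) = star ((starRingEnd ℂ) τ * (star cc ⬝ᵥ x)) := by
      rw [star_dotProduct (v := x) (w := cc)]
      simp [star_mul']
    have h2 : star τ * ((dd : ℝ) : ℂ) * τ = ((dd * Complex.normSq τ : ℝ) : ℂ) := by
      calc star τ * ((dd : ℝ) : ℂ) * τ = ((dd : ℝ) : ℂ) * ((starRingEnd ℂ) τ * τ) := by
            rw [Complex.star_def]; ring
        _ = ((dd : ℝ) : ℂ) * ((Complex.normSq τ : ℝ) : ℂ) := by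
            rw [← Complex.normSq_eq_conj_mul_self]
        _ = ((dd * Complex.normSq τ : ℝ) : ℂ) := by push_cast; ring
    rw [h1, h2]
    simp only [Complex.star_def, Complex.add_re, Complex.conj_re, Complex.ofReal_re]
    ring
  -- Hermitian-ness
  have hFh : F.IsHermitian := by
    show Fᴴ = F
    have e1 : (Matrix.of fun (_:Unit) j => star (c j))ᴴ = Matrix.of fun i (_:Unit) => c i := by
      ext i j; simp [Matrix.conjTranspose_apply]
    have e2 : (Matrix.of fun i (_:Unit) => c i)ᴴ = Matrix.of fun (_:Unit) j => star (c j) := by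
      ext i j; simp [Matrix.conjTranspose_apply]
    have e3 : (Matrix.of fun (_:Unit) (_:Unit) => ((d:ℝ):ℂ))ᴴ
        = Matrix.of fun (_:Unit) (_:Unit) => ((d:ℝ):ℂ) := by
      ext i j; simp [Matrix.conjTranspose_apply, Complex.star_def, Complex.conj_ofReal]
    rw [hFdef, Matrix.fromBlocks_conjTranspose, e1, e2, e3, hA.eq]
  have hGh : G.IsHermitian := by
    show Gᴴ = G
    have e1 : (Matrix.of fun (_:Unit) (_ : Fin n) => (0:ℂ))ᴴ = Matrix.of fun (_ : Fin n) (_:Unit) => (0:ℂ) := by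
      ext i j; simp [Matrix.conjTranspose_apply]
    have e2 : (Matrix.of fun (_ : Fin n) (_:Unit) => (0:ℂ))ᴴ = Matrix.of fun (_:Unit) (_ : Fin n) => (0:ℂ) := by
      ext i j; simp [Matrix.conjTranspose_apply]
    have e3 : (Matrix.of fun (_:Unit) (_:Unit) => ((-1:ℝ):ℂ))ᴴ
        = Matrix.of fun (_:Unit) (_:Unit) => ((-1:ℝ):ℂ) := by
      ext i j; simp [Matrix.conjTranspose_apply, Complex.star_def, Complex.conj_ofReal]
    rw [hGdef, Matrix.fromBlocks_conjTranspose, e1, e2, e3, hB.eq]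
  -- G in the canonical block shape
  have hGform : G = Matrix.fromBlocks B
      (Matrix.of fun i (_ : Unit) => (0 : Fin n → ℂ) i)
      (Matrix.of fun (_ : Unit) j => star ((0 : Fin n → ℂ) j))
      (Matrix.of fun (_ : Unit) (_ : Unit) => ((-1 : ℝ) : ℂ)) := by
    rw [hGdef]
    ext i j
    rcases i with i | i <;> rcases j with j | j <;> simp [Matrix.fromBlocks]
  have hGval : ∀ (x : Fin n → ℂ) (τ : ℂ),
      (star (Sum.elim x fun _ : Unit => τ) ⬝ᵥ G *ᵥ (Sum.elim x fun _ => τ)).re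
        = (star x ⬝ᵥ B *ᵥ x).re - Complex.normSq τ := by
    intro x τ
    rw [hGform, block_form, re_form B hB _ (-1) x τ]
    simp
    ring
  have hFval : ∀ (x : Fin n → ℂ) (τ : ℂ),
      (star (Sum.elim x fun _ : Unit => τ) ⬝ᵥ F *ᵥ (Sum.elim x fun _ => τ)).re
        = (star x ⬝ᵥ A *ᵥ x).re + 2 * ((starRingEnd ℂ) τ * (star c ⬝ᵥ x)).re
            + d * Complex.normSq τ := by
    intro x τ
    rw [hFdef, block_form, re_form A hA c d x τ]
  -- the sum F + lam • G is the block matrix of the statement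
  have hsum : ∀ lam : ℝ, F + (lam : ℂ) • G
      = Matrix.fromBlocks (A + (lam : ℂ) • B)
          (Matrix.of fun i (_ : Unit) => c i)
          (Matrix.of fun (_ : Unit) j => star (c j))
          (Matrix.of fun (_ : Unit) (_ : Unit) => ((d - lam : ℝ) : ℂ)) := by
    intro lam
    rw [hFdef, hGdef]
    ext i j
    rcases i with i | i <;> rcases j with j | j <;>
      simp [Matrix.fromBlocks, Matrix.add_apply, Matrix.smul_apply, smul_eq_mul] <;>
      push_cast <;> ring
  constructor
  · -- hard direction
    intro hfeas
    have hyp : ∀ z : (Fin n ⊕ Unit) → ℂ,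
        (star z ⬝ᵥ G *ᵥ z).re ≤ 0 → 0 ≤ (star z ⬝ᵥ F *ᵥ z).re := by
      intro z hzle
      set x : Fin n → ℂ := z ∘ Sum.inl with hxdef
      set τ : ℂ := z (Sum.inr ()) with hτdef
      have hz : z = Sum.elim x fun _ : Unit => τ := by
        funext i
        rcases i with i | u
        · rfl
        · cases u; rfl
      rw [hz, hGval x τ] at hzle
      rw [hz]
      rw [show (0:ℝ) ≤ (star (Sum.elim x fun _ : Unit => τ) ⬝ᵥ F *ᵥ (Sum.elim x fun _ => τ)).re
          ↔ 0 ≤ (star x ⬝ᵥ A *ᵥ x).re + 2 * ((starRingEnd ℂ) τ * (star c ⬝ᵥ x)).re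
            + d * Complex.normSq τ by rw [hFval x τ]]
      by_cases hτ0 : τ = 0
      · -- homogeneous case : need 0 ≤ xᴴAx from xᴴBx ≤ 0
        rw [hτ0] at hzle ⊢
        simp only [Complex.normSq_zero, sub_zero] at hzle
        simp only [map_zero, zero_mul, Complex.zero_re, mul_zero, add_zero]
        obtain ⟨y, hy⟩ := hSlater
        set μ : ℂ := star y ⬝ᵥ B *ᵥ x with hμ
        obtain ⟨ω, hω1, hωμ⟩ : ∃ ω : ℂ, Complex.normSq ω = 1 ∧ (ω * μ).re ≤ 0 := by
          by_cases hμ0 : μ = 0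
          · exact ⟨1, by simp, by simp [hμ0]⟩
          · refine ⟨-(starRingEnd ℂ) μ / (‖μ‖ : ℝ), ?_, ?_⟩
            · rw [Complex.normSq_div]
              simp only [Complex.normSq_neg, Complex.normSq_conj, Complex.normSq_ofReal]
              rw [← Complex.sq_norm]
              have : ‖μ‖ ≠ 0 := by
                simpa using hμ0
              field_simp
            · have : -(starRingEnd ℂ) μ / (‖μ‖ : ℝ) * μ
                  = ((-(Complex.normSq μ / ‖μ‖) : ℝ) : ℂ) := by
                rw [div_mul_eq_mul_div, neg_mul]
                rw [show (starRingEnd ℂ) μ * μ = ((Complex.normSq μ : ℝ) : ℂ) from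
                  (Complex.normSq_eq_conj_mul_self).symm]
                push_cast
                ring
              rw [this, Complex.ofReal_re]
              have h1 : 0 ≤ Complex.normSq μ / ‖μ‖ :=
                div_nonneg (Complex.normSq_nonneg μ) (norm_nonneg μ)
              linarith
        set x'' : Fin n → ℂ := ω • x with hx''
        have hωc : (starRingEnd ℂ) ω * ω = 1 := by
          rw [← Complex.normSq_eq_conj_mul_self, hω1]; norm_num
        have f1 : star y ⬝ᵥ B *ᵥ x'' = ω * μ := by
          rw [hx'', sesq_smul_right, hμ]
        have f2 : star x'' ⬝ᵥ B *ᵥ y = (starRingEnd ℂ) (ω * μ) := by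
          rw [← herm_conj hB y x'', f1]
        have f3 : star x'' ⬝ᵥ B *ᵥ x'' = star x ⬝ᵥ B *ᵥ x := by
          rw [hx'', smul_sesq, hωc, one_mul]
        have f4 : star x'' ⬝ᵥ A *ᵥ x'' = star x ⬝ᵥ A *ᵥ x := by
          rw [hx'', smul_sesq, hωc, one_mul]
        have hquad : ∀ s : ℝ, 0 ≤ s →
            0 ≤ (star x ⬝ᵥ A *ᵥ x).re * s ^ 2
              + (2 * (star y ⬝ᵥ A *ᵥ x'').re + 2 * (star c ⬝ᵥ x'').re) * s
              + ((star y ⬝ᵥ A *ᵥ y).re + 2 * (star c ⬝ᵥ y).re + d) := by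
          intro s hsnn
          set ys : Fin n → ℂ := y + (s : ℂ) • x'' with hys
          have hBexp : star ys ⬝ᵥ B *ᵥ ys
              = star y ⬝ᵥ B *ᵥ y + (s:ℂ) * (ω * μ) + (s:ℂ) * (starRingEnd ℂ) (ω * μ)
                + ((s^2 : ℝ):ℂ) * (star x ⬝ᵥ B *ᵥ x) := by
            rw [hys, quad_add, sesq_smul_right, f1, sesq_smul_left, f2, smul_sesq, f3,
              Complex.conj_ofReal]
            push_cast
            ring
          have hBre : (star ys ⬝ᵥ B *ᵥ ys).re
              = (star y ⬝ᵥ B *ᵥ y).re + s * (2 * (ω * μ).re)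
                + s^2 * (star x ⬝ᵥ B *ᵥ x).re := by
            rw [hBexp]
            simp only [Complex.add_re, Complex.re_ofReal_mul, Complex.mul_re,
              Complex.conj_re, Complex.conj_im, Complex.ofReal_re, Complex.ofReal_im]
            ring
          have hconstr : (star ys ⬝ᵥ B *ᵥ ys).re ≤ 1 := by
            rw [hBre]
            have t1 : s * (2 * (ω * μ).re) ≤ 0 := by
              apply mul_nonpos_of_nonneg_of_nonpos hsnn
              linarith
            have t2 : s^2 * (star x ⬝ᵥ B *ᵥ x).re ≤ 0 :=
              mul_nonpos_of_nonneg_of_nonpos (sq_nonneg s) hzle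
            linarith
          have hobj := hfeas ys hconstr
          have hAexp : star ys ⬝ᵥ A *ᵥ ys
              = star y ⬝ᵥ A *ᵥ y + (s:ℂ) * (star y ⬝ᵥ A *ᵥ x'')
                + (s:ℂ) * (starRingEnd ℂ) (star y ⬝ᵥ A *ᵥ x'')
                + ((s^2 : ℝ):ℂ) * (star x ⬝ᵥ A *ᵥ x) := by
            rw [hys, quad_add, sesq_smul_right, sesq_smul_left,
              ← herm_conj hA y x'', smul_sesq, f4, Complex.conj_ofReal]
            push_cast
            ring
          have hAre : (star ys ⬝ᵥ A *ᵥ ys).re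
              = (star y ⬝ᵥ A *ᵥ y).re + s * (2 * (star y ⬝ᵥ A *ᵥ x'').re)
                + s^2 * (star x ⬝ᵥ A *ᵥ x).re := by
            rw [hAexp]
            simp only [Complex.add_re, Complex.re_ofReal_mul, Complex.mul_re,
              Complex.conj_re, Complex.conj_im, Complex.ofReal_re, Complex.ofReal_im]
            ring
          have hcre : (star c ⬝ᵥ ys).re = (star c ⬝ᵥ y).re + s * (star c ⬝ᵥ x'').re := by
            rw [hys, dotProduct_add, dotProduct_smul, smul_eq_mul]
            simp [Complex.add_re, Complex.re_ofReal_mul]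
          rw [hAre, hcre] at hobj
          nlinarith [hobj]
        have := lead_nonneg hquad
        exact this
      · -- inhomogeneous case : scale by τ⁻¹
        set k : ℝ := Complex.normSq τ with hk
        have hkpos : 0 < k := by
          rw [hk]
          exact Complex.normSq_pos.mpr hτ0
        set x' : Fin n → ℂ := τ⁻¹ • x with hx'
        have hsc : (starRingEnd ℂ) τ⁻¹ * τ⁻¹ = (((k⁻¹ : ℝ)) : ℂ) := by
          rw [map_inv₀, ← mul_inv]
          rw [show (starRingEnd ℂ) τ * τ = ((Complex.normSq τ : ℝ) : ℂ) from
            (Complex.normSq_eq_conj_mul_self).symm]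
          rw [← hk]
          push_cast
          ring
        have hBsc : (star x' ⬝ᵥ B *ᵥ x').re = k⁻¹ * (star x ⬝ᵥ B *ᵥ x).re := by
          rw [hx', smul_sesq, hsc, Complex.re_ofReal_mul]
        have hcsc : star c ⬝ᵥ x' = τ⁻¹ * (star c ⬝ᵥ x) := by
          rw [hx', dotProduct_smul, smul_eq_mul]
        have hconstr : (star x' ⬝ᵥ B *ᵥ x').re ≤ 1 := by
          rw [hBsc]
          rw [inv_mul_le_iff₀ hkpos, mul_one]
          linarith
        have hobj := hfeas x' hconstr
        rw [hcsc] at hobj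
        rw [hBsc] at hconstr
        have hAsc : (star x' ⬝ᵥ A *ᵥ x').re = k⁻¹ * (star x ⬝ᵥ A *ᵥ x).re := by
          rw [hx', smul_sesq, hsc, Complex.re_ofReal_mul]
        rw [hAsc] at hobj
        have hre : (starRingEnd ℂ) τ * (star c ⬝ᵥ x) = (k : ℂ) * (τ⁻¹ * (star c ⬝ᵥ x)) := by
          rw [show ((k:ℝ) : ℂ) = (starRingEnd ℂ) τ * τ from by
            rw [hk]; exact Complex.normSq_eq_conj_mul_self]
          field_simp
        have hre2 : ((starRingEnd ℂ) τ * (star c ⬝ᵥ x)).re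
            = k * (τ⁻¹ * (star c ⬝ᵥ x)).re := by
          rw [hre, Complex.re_ofReal_mul]
        rw [hre2]
        have hmul := mul_le_mul_of_nonneg_left hobj hkpos.le
        have hid : k * (k⁻¹ * (star x ⬝ᵥ A *ᵥ x).re
            + 2 * (τ⁻¹ * (star c ⬝ᵥ x)).re + d)
            = (star x ⬝ᵥ A *ᵥ x).re + 2 * (k * (τ⁻¹ * (star c ⬝ᵥ x)).re) + d * k := by
          field_simp
        rw [mul_zero] at hmul
        rw [hid] at hmul
        linarith
    have slater' : ∃ z : (Fin n ⊕ Unit) → ℂ, (star z ⬝ᵥ G *ᵥ z).re < 0 := by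
      obtain ⟨x₀, hx₀⟩ := hSlater
      refine ⟨Sum.elim x₀ fun _ : Unit => 1, ?_⟩
      rw [hGval x₀ 1]
      simp
      linarith
    obtain ⟨lam, hlam, hpsd⟩ := homog_S_lemma F G hFh hGh slater' hyp
    exact ⟨lam, hlam, by rw [← hsum lam]; exact hpsd⟩
  · -- easy direction
    rintro ⟨lam, hlam, hpsd⟩ x hx
    rw [← hsum lam] at hpsd
    have hval := hpsd.dotProduct_mulVec_nonneg (Sum.elim x fun _ : Unit => 1)
    have hexp : star (Sum.elim x fun _ : Unit => (1:ℂ)) ⬝ᵥ (F + (lam : ℂ) • G) *ᵥ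
        (Sum.elim x fun _ => (1:ℂ))
        = (star (Sum.elim x fun _ : Unit => (1:ℂ)) ⬝ᵥ F *ᵥ (Sum.elim x fun _ => (1:ℂ)))
          + (lam : ℂ) * (star (Sum.elim x fun _ : Unit => (1:ℂ)) ⬝ᵥ G *ᵥ
              (Sum.elim x fun _ => (1:ℂ))) := by
      rw [Matrix.add_mulVec, dotProduct_add, Matrix.smul_mulVec, dotProduct_smul,
        smul_eq_mul]
    rw [hexp, Complex.le_def] at hval
    obtain ⟨hvre, _⟩ := hval
    simp only [Complex.zero_re, Complex.add_re, Complex.re_ofReal_mul] at hvre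
    rw [hFval x 1, hGval x 1] at hvre
    simp only [_root_.map_one, one_mul, Complex.normSq_one, mul_one] at hvre
    have hfac : lam * ((star x ⬝ᵥ B *ᵥ x).re - 1) ≤ 0 :=
      mul_nonpos_of_nonneg_of_nonpos hlam (by linarith)
    linarith
end

section
/- Fix i and let ĥ_{i,j} ∈ ℂᴺ (j = 1,…,K) be estimated channels, B_{i,j} be N×N Hermitian positive definite matrices, W_1, …, W_K be N×N Hermitian positive semidefinite matrices, and let σ² > 0, δ > 0, γ > 0, ρ ∈ (0,1]. Then the worst-case constraint '(ĥ_{i,i}+e_{i,i})ᴴ W_i (ĥ_{i,i}+e_{i,i})/γ − Σ_{j≠i} (ĥ_{i,j}+e_{i,j})ᴴ W_j (ĥ_{i,j}+e_{i,j}) − σ² ≥ δ²/ρ for all (e_{i,1},…,e_{i,K}) with e_{i,j}ᴴ B_{i,j} e_{i,j} ≤ 1 for every j' holds if and only if there exist real numbers t̄_{i,j} ≥ 0 (j ≠ i) such that: (a) for every e_{i,i} with e_{i,i}ᴴ B_{i,i} e_{i,i} ≤ 1, the 2×2 real symmetric matrix [[ρ, δ], [δ, (ĥ_{i,i}+e_{i,i})ᴴ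 W_i (ĥ_{i,i}+e_{i,i})/γ − Σ_{j≠i} t̄_{i,j} − σ²]] is positive semidefinite, and (b) for every j ≠ i and every e_{i,j} with e_{i,j}ᴴ B_{i,j} e_{i,j} ≤ 1, (ĥ_{i,j}+e_{i,j})ᴴ W_j (ĥ_{i,j}+e_{i,j}) ≤ t̄_{i,j}. -/
open Matrix ComplexOrder

lemma psd2_iff (ρ δ c : ℝ) (hρ : 0 < ρ) :
    (!![ρ, δ; δ, c] : Matrix (Fin 2) (Fin 2) ℝ).PosSemidef ↔ δ ^ 2 / ρ ≤ c := by
  constructor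
  · intro h
    have h1 := h.dotProduct_mulVec_nonneg ![-δ/ρ, 1]
    simp [dotProduct, Matrix.mulVec, Fin.sum_univ_two] at h1
    have h2 : -δ / ρ * (ρ * (-δ / ρ) + δ) + (δ * (-δ / ρ) + c) = c - δ^2/ρ := by
      field_simp; ring
    rw [h2] at h1
    linarith
  · intro h
    refine Matrix.PosSemidef.of_dotProduct_mulVec_nonneg ?_ ?_
    · ext a b
      fin_cases a <;> fin_cases b <;>
        simp [Matrix.conjTranspose, Matrix.vecHead, Matrix.vecTail]
    · intro x
      have hx : star x ⬝ᵥ !![ρ, δ; δ, c] *ᵥ x =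
          ρ * (x 0)^2 + 2*δ*(x 0)*(x 1) + c * (x 1)^2 := by
        simp [dotProduct, Matrix.mulVec, Fin.sum_univ_two]; ring
      rw [hx]
      have h2 : δ^2 ≤ c * ρ := by rw [div_le_iff₀ hρ] at h; linarith
      nlinarith [sq_nonneg (ρ * x 0 + δ * x 1), sq_nonneg (x 1), mul_pos hρ hρ]

/-- The worst-case SINR constraint of receiver `i` over ellipsoidal channel uncertainty
is equivalent to a per-error 2×2 PSD condition together with worst-case interference
bounds encoded by slack variables `tb_{i,j}`. -/
theorem worst_case_sinr_slack_iff {N K : ℕ} (i : Fin K)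
    (hh : Fin K → (Fin N → ℂ))
    (B : Fin K → Matrix (Fin N) (Fin N) ℂ) (hB : ∀ j, (B j).PosDef)
    (W : Fin K → Matrix (Fin N) (Fin N) ℂ) (hW : ∀ j, (W j).PosSemidef)
    (σ2 δ γ ρ : ℝ) (hσ2 : 0 < σ2) (hδ : 0 < δ) (hγ : 0 < γ)
    (hρ0 : 0 < ρ) (hρ1 : ρ ≤ 1) :
    (∀ e : Fin K → (Fin N → ℂ), (∀ j, (star (e j) ⬝ᵥ (B j) *ᵥ (e j)).re ≤ 1) →
        (star (hh i + e i) ⬝ᵥ (W i) *ᵥ (hh i + e i)).re / γ -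
            (∑ j ∈ Finset.univ.erase i,
              (star (hh j + e j) ⬝ᵥ (W j) *ᵥ (hh j + e j)).re) - σ2 ≥ δ ^ 2 / ρ) ↔
      (∃ tb : Fin K → ℝ, (∀ j ∈ Finset.univ.erase i, 0 ≤ tb j) ∧
        (∀ e : Fin N → ℂ, (star e ⬝ᵥ (B i) *ᵥ e).re ≤ 1 →
          (!![ρ, δ; δ,
              (star (hh i + e) ⬝ᵥ (W i) *ᵥ (hh i + e)).re / γ -
                (∑ j ∈ Finset.univ.erase i, tb j) - σ2] :
            Matrix (Fin 2) (Fin 2) ℝ).PosSemidef) ∧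
        (∀ j ∈ Finset.univ.erase i, ∀ e : Fin N → ℂ,
          (star e ⬝ᵥ (B j) *ᵥ e).re ≤ 1 →
          (star (hh j + e) ⬝ᵥ (W j) *ᵥ (hh j + e)).re ≤ tb j)) := by
  classical
  set q : Fin K → (Fin N → ℂ) → ℝ :=
    fun j v => (star (hh j + v) ⬝ᵥ (W j) *ᵥ (hh j + v)).re with hq
  have hq_nonneg : ∀ j v, 0 ≤ q j v := fun j v => (hW j).re_dotProduct_nonneg _
  have hadm0 : ∀ j, (star (0 : Fin N → ℂ) ⬝ᵥ (B j) *ᵥ (0 : Fin N → ℂ)).re ≤ 1 := by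
    intro j; simp
  constructor
  · intro H
    set S : Fin K → Set ℝ :=
      fun j => {r | ∃ v : Fin N → ℂ, (star v ⬝ᵥ (B j) *ᵥ v).re ≤ 1 ∧ r = q j v} with hS
    have hSne : ∀ j, (S j).Nonempty := fun j => ⟨q j 0, 0, hadm0 j, rfl⟩
    -- uniform upper bound for j ≠ i
    have hbd : ∀ j, j ≠ i → ∀ r ∈ S j, r ≤ q i 0 / γ - σ2 - δ ^ 2 / ρ := by
      intro j hj r ⟨v, hv, hr⟩
      set e : Fin K → (Fin N → ℂ) := fun k => if k = j then v else 0 with he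
      have hadm : ∀ k, (star (e k) ⬝ᵥ (B k) *ᵥ (e k)).re ≤ 1 := by
        intro k
        by_cases h : k = j <;> simp [he, h, hv, hadm0 k]
      have h1 := H e hadm
      have hei : e i = 0 := by simp [he, Ne.symm hj]
      have hsum : q j v ≤ ∑ k ∈ Finset.univ.erase i, q k (e k) := by
        have hmem : j ∈ Finset.univ.erase i := Finset.mem_erase.2 ⟨hj, Finset.mem_univ j⟩
        have := Finset.single_le_sum (f := fun k => q k (e k))
          (fun k _ => hq_nonneg k (e k)) hmem
        simpa [he] using this
      rw [hei] at h1
      rw [hr]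
      have := h1
      dsimp [q] at hsum ⊢
      linarith [hsum, this]
    have hBdd : ∀ j, j ≠ i → BddAbove (S j) :=
      fun j hj => ⟨_, fun r hr => hbd j hj r hr⟩
    refine ⟨fun j => sSup (S j), ?_, ?_, ?_⟩
    · intro j hj
      have hj' : j ≠ i := (Finset.mem_erase.1 hj).1
      exact le_trans (hq_nonneg j 0) (le_csSup (hBdd j hj') ⟨0, hadm0 j, rfl⟩)
    · intro e0 he0
      rw [psd2_iff _ _ _ hρ0]
      -- need: ∑ tb ≤ q i e0 / γ - σ2 - δ²/ρ
      have key : ∑ j ∈ Finset.univ.erase i, sSup (S j) ≤ q i e0 / γ - σ2 - δ ^ 2 / ρ := by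
        refine le_of_forall_pos_le_add ?_
        intro ε hε
        have hK : 0 < (K : ℝ) := by
          have := i.pos
          exact_mod_cast this
        have hε' : 0 < ε / K := div_pos hε hK
        -- choose near-optimal witnesses
        have hch : ∀ j, j ≠ i → ∃ v : Fin N → ℂ,
            (star v ⬝ᵥ (B j) *ᵥ v).re ≤ 1 ∧ sSup (S j) - ε / K < q j v := by
          intro j hj
          have hlt : sSup (S j) - ε / K < sSup (S j) := by linarith
          obtain ⟨r, hrS, hrlt⟩ := exists_lt_of_lt_csSup (hSne j) hlt
          obtain ⟨v, hv, rfl⟩ := hrS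
          exact ⟨v, hv, hrlt⟩
        set e : Fin K → (Fin N → ℂ) :=
          fun j => if h : j = i then e0 else Classical.choose (hch j h) with he
        have hadm : ∀ k, (star (e k) ⬝ᵥ (B k) *ᵥ (e k)).re ≤ 1 := by
          intro k
          by_cases h : k = i
          · simp [he, h, he0]
          · simpa [he, h] using (Classical.choose_spec (hch k h)).1
        have h1 := H e hadm
        have hei : e i = e0 := by simp [he]
        rw [hei] at h1
        have hsum1 : ∑ j ∈ Finset.univ.erase i, (sSup (S j) - ε / K)
            ≤ ∑ j ∈ Finset.univ.erase i, q j (e j) := by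
          apply Finset.sum_le_sum
          intro j hj
          have hj' : j ≠ i := (Finset.mem_erase.1 hj).1
          have := (Classical.choose_spec (hch j hj')).2
          have hej : e j = Classical.choose (hch j hj') := by simp [he, hj']
          rw [hej]
          linarith
        rw [Finset.sum_sub_distrib] at hsum1
        have hcard : (Finset.univ.erase i).card ≤ K := by
          simpa using Finset.card_le_card (Finset.erase_subset _ _)
        have hcε : ((Finset.univ.erase i).card : ℝ) * (ε / K) ≤ ε := by
          rw [div_eq_mul_inv, ← mul_assoc]
          have h2 : ((Finset.univ.erase i).card : ℝ) * ε ≤ K * ε :=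
            mul_le_mul_of_nonneg_right (by exact_mod_cast hcard) hε.le
          calc ((Finset.univ.erase i).card : ℝ) * ε * (K : ℝ)⁻¹
              ≤ (K : ℝ) * ε * (K : ℝ)⁻¹ :=
                mul_le_mul_of_nonneg_right h2 (by positivity)
            _ = ε := by field_simp
        simp only [Finset.sum_const, nsmul_eq_mul] at hsum1
        dsimp [q] at h1 hsum1 ⊢
        linarith
      dsimp [q] at key
      linarith
    · intro j hj v hv
      have hj' : j ≠ i := (Finset.mem_erase.1 hj).1
      exact le_csSup (hBdd j hj') ⟨v, hv, rfl⟩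
  · rintro ⟨tb, htb0, hpsd, hle⟩ e hadm
    have h1 := (psd2_iff _ _ _ hρ0).1 (hpsd (e i) (hadm i))
    have h2 : ∑ j ∈ Finset.univ.erase i, q j (e j) ≤ ∑ j ∈ Finset.univ.erase i, tb j :=
      Finset.sum_le_sum fun j hj => hle j hj (e j) (hadm j)
    dsimp [q] at h1 h2
    linarith
end

section
/- Let W and B be N×N Hermitian positive semidefinite complex matrices, ĥ ∈ ℂᴺ, and let ρ ≥ 0, δ ∈ ℝ, γ > 0, C ∈ ℝ. Then the 2×2 real symmetric matrix [[ρ, δ], [δ, (ĥ+e)ᴴ W (ĥ+e)/γ + C]] is positive semidefinite for every e ∈ ℂᴺ with eᴴ B e ≤ 1, if and only if there exists ν ≥ 0 such that the (N+2)×(N+2) Hermitian block matrix [[ρ, δ, 0], [δ, ĥᴴWĥ/γ + C − ν, ĥᴴW/γ], [0, Wĥ/γ, W/γ + νB]] is positive semidefinite. -/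
open Matrix ComplexOrder

section AuxRobustSchur

lemma qf_bilin {N : ℕ} (M : Matrix (Fin N) (Fin N) ℂ) (s t : ℂ) (x y : Fin N → ℂ) :
    star (s • x + t • y) ⬝ᵥ M *ᵥ (s • x + t • y) =
      star s * s * (star x ⬝ᵥ M *ᵥ x) + star s * t * (star x ⬝ᵥ M *ᵥ y)
        + star t * s * (star y ⬝ᵥ M *ᵥ x) + star t * t * (star y ⬝ᵥ M *ᵥ y) := by
  simp [star_add, star_smul, mulVec_add, mulVec_smul, add_dotProduct, dotProduct_add,
    smul_dotProduct, dotProduct_smul, smul_eq_mul]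
  ring

lemma qf_sub {N : ℕ} (M : Matrix (Fin N) (Fin N) ℂ) (x y : Fin N → ℂ) :
    star (x - y) ⬝ᵥ M *ᵥ (x - y) =
      (star x ⬝ᵥ M *ᵥ x) - (star x ⬝ᵥ M *ᵥ y) - (star y ⬝ᵥ M *ᵥ x) + (star y ⬝ᵥ M *ᵥ y) := by
  simp [star_sub, mulVec_sub, sub_dotProduct, dotProduct_sub]
  ring

lemma qf_csmul {N : ℕ} (M : Matrix (Fin N) (Fin N) ℂ) (t : ℂ) (u : Fin N → ℂ) :
    star (t • u) ⬝ᵥ M *ᵥ (t • u) = star t * t * (star u ⬝ᵥ M *ᵥ u) := by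
  simp [star_smul, mulVec_smul, smul_dotProduct, dotProduct_smul, smul_eq_mul]
  ring

lemma star_mul_self_c (t : ℂ) : star t * t = ((t.re ^ 2 + t.im ^ 2 : ℝ) : ℂ) := by
  rw [RCLike.star_def]
  apply Complex.ext <;>
    simp only [Complex.mul_re, Complex.mul_im, Complex.conj_re, Complex.conj_im,
      Complex.ofReal_re, Complex.ofReal_im] <;> ring

lemma qf_convex {N : ℕ} {M : Matrix (Fin N) (Fin N) ℂ} (hM : M.PosSemidef)
    (a b : ℝ) (hab : a + b = 1) (ha : 0 ≤ a) (hb : 0 ≤ b) (x y : Fin N → ℂ) :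
    (star ((a : ℂ) • x + (b : ℂ) • y) ⬝ᵥ M *ᵥ ((a : ℂ) • x + (b : ℂ) • y)).re ≤
      a * (star x ⬝ᵥ M *ᵥ x).re + b * (star y ⬝ᵥ M *ᵥ y).re := by
  have key : star ((a : ℂ) • x + (b : ℂ) • y) ⬝ᵥ M *ᵥ ((a : ℂ) • x + (b : ℂ) • y)
      + ((a : ℂ) * b) * (star (x - y) ⬝ᵥ M *ᵥ (x - y))
      = (a : ℂ) * (star x ⬝ᵥ M *ᵥ x) + (b : ℂ) * (star y ⬝ᵥ M *ᵥ y) := by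
    rw [qf_bilin, qf_sub]
    have h1 : ((a : ℂ) + b) = 1 := by exact_mod_cast congrArg (Complex.ofReal) hab
    simp only [RCLike.star_def, Complex.conj_ofReal]
    linear_combination ((a:ℂ) * (star x ⬝ᵥ M *ᵥ x) + (b:ℂ) * (star y ⬝ᵥ M *ᵥ y)) * h1
  have h2 : 0 ≤ (star (x - y) ⬝ᵥ M *ᵥ (x - y)).re := (Complex.nonneg_iff.mp (hM.dotProduct_mulVec_nonneg (x - y))).1
  have h3 := congrArg Complex.re key
  simp only [Complex.add_re] at h3
  have h4 : (((a : ℂ) * b) * (star (x - y) ⬝ᵥ M *ᵥ (x - y))).re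
      = (a * b) * (star (x - y) ⬝ᵥ M *ᵥ (x - y)).re := by
    rw [show ((a : ℂ) * b) = ((a * b : ℝ) : ℂ) by push_cast; ring, Complex.re_ofReal_mul]
  have h5 : ((a : ℂ) * (star x ⬝ᵥ M *ᵥ x)).re = a * (star x ⬝ᵥ M *ᵥ x).re :=
    Complex.re_ofReal_mul _ _
  have h6 : ((b : ℂ) * (star y ⬝ᵥ M *ᵥ y)).re = b * (star y ⬝ᵥ M *ᵥ y).re :=
    Complex.re_ofReal_mul _ _
  nlinarith [mul_nonneg (mul_nonneg ha hb) h2]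

lemma herm_form_im {n : Type*} [Fintype n] {M : Matrix n n ℂ} (hM : M.IsHermitian)
    (x : n → ℂ) : (star x ⬝ᵥ M *ᵥ x).im = 0 := by
  have h : star (star x ⬝ᵥ M *ᵥ x) = star x ⬝ᵥ M *ᵥ x := by
    nth_rewrite 1 [star_dotProduct]
    rw [star_star, star_mulVec, ← dotProduct_mulVec, hM.eq]
  exact Complex.conj_eq_iff_im.mp h

lemma form2 (ρ δ m : ℝ) (z : Fin 2 → ℝ) :
    star z ⬝ᵥ (!![ρ, δ; δ, m] : Matrix (Fin 2) (Fin 2) ℝ) *ᵥ z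
      = ρ * (z 0) ^ 2 + 2 * δ * (z 0) * (z 1) + m * (z 1) ^ 2 := by
  simp [dotProduct, Matrix.mulVec, Fin.sum_univ_two]
  ring

lemma psd2_facts {ρ δ m : ℝ} (h : (!![ρ, δ; δ, m] : Matrix (Fin 2) (Fin 2) ℝ).PosSemidef)
    (hρ : 0 ≤ ρ) : 0 ≤ m ∧ δ ^ 2 ≤ ρ * m := by
  have hform : ∀ z : Fin 2 → ℝ, 0 ≤ ρ * (z 0) ^ 2 + 2 * δ * (z 0) * (z 1) + m * (z 1) ^ 2 := by
    intro z
    have := h.dotProduct_mulVec_nonneg z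
    rwa [form2] at this
  have hm : 0 ≤ m := by
    have := hform ![0, 1]
    simpa using this
  refine ⟨hm, ?_⟩
  rcases hρ.lt_or_eq with h0 | h0
  · have hx := hform ![δ, -ρ]
    simp only [Matrix.cons_val_zero, Matrix.cons_val_one, Matrix.head_cons] at hx
    nlinarith [hx]
  · have hδ : δ = 0 := by
      by_contra hd
      have h2 : 2 * δ ≠ 0 := mul_ne_zero two_ne_zero hd
      have hx := hform ![(-(m + 1)) / (2 * δ), 1]
      simp only [Matrix.cons_val_zero, Matrix.cons_val_one, Matrix.head_cons] at hx
      have hc : 2 * δ * ((-(m + 1)) / (2 * δ)) = -(m + 1) := by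
        rw [mul_comm, div_mul_cancel₀ _ h2]
      nlinarith [hx]
    rw [hδ, ← h0]
    simp

lemma bigform {N : ℕ} (W B : Matrix (Fin N) (Fin N) ℂ) (hh : Fin N → ℂ) (ρ δ γ C ν : ℝ)
    (a t : ℂ) (v : Fin N → ℂ) :
    star (Sum.elim ![a, t] v) ⬝ᵥ
      (Matrix.fromBlocks
          (!![(ρ : ℂ), (δ : ℂ);
              (δ : ℂ), (star hh ⬝ᵥ W *ᵥ hh) / (γ : ℂ) + (C : ℂ) - (ν : ℂ)])
          (Matrix.of fun p j => if p = (0 : Fin 2) then 0 else (star hh ᵥ* W) j / (γ : ℂ))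
          (Matrix.of fun j p => if p = (0 : Fin 2) then 0 else (W *ᵥ hh) j / (γ : ℂ))
          ((γ : ℂ)⁻¹ • W + (ν : ℂ) • B)) *ᵥ (Sum.elim ![a, t] v) =
      (ρ : ℂ) * (star a * a) + (δ : ℂ) * (star a * t + star t * a)
        + ((C : ℂ) - (ν : ℂ)) * (star t * t)
        + (star (t • hh + v) ⬝ᵥ W *ᵥ (t • hh + v)) / (γ : ℂ)
        + (ν : ℂ) * (star v ⬝ᵥ B *ᵥ v) := by
  set A : Matrix (Fin 2) (Fin 2) ℂ :=
    !![(ρ : ℂ), (δ : ℂ); (δ : ℂ), (star hh ⬝ᵥ W *ᵥ hh) / (γ : ℂ) + (C : ℂ) - (ν : ℂ)] with hA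
  set Brow : Matrix (Fin 2) (Fin N) ℂ :=
    Matrix.of fun p j => if p = (0 : Fin 2) then 0 else (star hh ᵥ* W) j / (γ : ℂ) with hBrow
  set Ccol : Matrix (Fin N) (Fin 2) ℂ :=
    Matrix.of fun j p => if p = (0 : Fin 2) then 0 else (W *ᵥ hh) j / (γ : ℂ) with hCcol
  set D : Matrix (Fin N) (Fin N) ℂ := (γ : ℂ)⁻¹ • W + (ν : ℂ) • B with hD
  have hstar : star (Sum.elim ![a, t] v) = Sum.elim ![star a, star t] (star v) := by
    funext i; rcases i with i | i
    · fin_cases i <;> simp [Pi.star_apply]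
    · simp [Pi.star_apply]
  rw [hstar, fromBlocks_mulVec, sumElim_dotProduct_sumElim]
  simp only [Sum.elim_comp_inl, Sum.elim_comp_inr]
  have hrow0 : (Brow *ᵥ v) 0 = 0 := by simp [hBrow, Matrix.mulVec, dotProduct]
  have hrow1 : (Brow *ᵥ v) 1 = (star hh ⬝ᵥ W *ᵥ v) / (γ : ℂ) := by
    rw [dotProduct_mulVec]
    show (fun j => Brow 1 j) ⬝ᵥ v = _
    simp only [hBrow, Matrix.of_apply, if_neg (by decide : ¬(1 : Fin 2) = 0), dotProduct]
    calc ∑ x, (star hh ᵥ* W) x / (γ:ℂ) * v x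
        = ∑ x, (star hh ᵥ* W) x * v x / (γ:ℂ) := Finset.sum_congr rfl fun j _ => by ring
      _ = (∑ i, (star hh ᵥ* W) i * v i) / (γ:ℂ) := (Finset.sum_div _ _ _).symm
  have hA0 : (A *ᵥ ![a, t]) 0 = (ρ : ℂ) * a + (δ : ℂ) * t := by
    simp [hA, Matrix.mulVec, dotProduct, Fin.sum_univ_two]
  have hA1 : (A *ᵥ ![a, t]) 1 =
      (δ : ℂ) * a + ((star hh ⬝ᵥ W *ᵥ hh) / (γ : ℂ) + (C : ℂ) - (ν : ℂ)) * t := by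
    simp [hA, Matrix.mulVec, dotProduct, Fin.sum_univ_two]
  have hterm1 : ![star a, star t] ⬝ᵥ (A *ᵥ ![a, t] + Brow *ᵥ v)
      = star a * ((A *ᵥ ![a, t]) 0 + (Brow *ᵥ v) 0)
        + star t * ((A *ᵥ ![a, t]) 1 + (Brow *ᵥ v) 1) := by
    simp [dotProduct, Fin.sum_univ_two]
  have hcol : ∀ j, (Ccol *ᵥ ![a, t]) j = (W *ᵥ hh) j * t / (γ : ℂ) := by
    intro j
    show (fun p => Ccol j p) ⬝ᵥ ![a, t] = _
    simp only [hCcol, Matrix.of_apply, dotProduct, Fin.sum_univ_two]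
    norm_num
    ring
  have hc2 : star v ⬝ᵥ (Ccol *ᵥ ![a, t]) = t * (star v ⬝ᵥ W *ᵥ hh) / (γ : ℂ) := by
    simp only [dotProduct]
    calc ∑ j, star v j * (Ccol *ᵥ ![a, t]) j
        = ∑ j, star v j * (W *ᵥ hh) j * t / (γ : ℂ) := by
          refine Finset.sum_congr rfl fun j _ => ?_; rw [hcol j]; ring
      _ = t * (∑ j, star v j * (W *ᵥ hh) j) / (γ : ℂ) := by
          rw [Finset.mul_sum, ← Finset.sum_div]
          refine congrArg (· / (γ:ℂ)) (Finset.sum_congr rfl fun j _ => by ring)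
  have hd : star v ⬝ᵥ (D *ᵥ v)
      = (γ : ℂ)⁻¹ * (star v ⬝ᵥ W *ᵥ v) + (ν : ℂ) * (star v ⬝ᵥ B *ᵥ v) := by
    simp [hD, add_mulVec, smul_mulVec, dotProduct_add, dotProduct_smul, smul_eq_mul]
  have hq : star (t • hh + v) ⬝ᵥ W *ᵥ (t • hh + v) =
      star t * t * (star hh ⬝ᵥ W *ᵥ hh) + star t * (star hh ⬝ᵥ W *ᵥ v)
        + t * (star v ⬝ᵥ W *ᵥ hh) + star v ⬝ᵥ W *ᵥ v := by
    simp [star_add, star_smul, mulVec_add, mulVec_smul, add_dotProduct, dotProduct_add,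
      smul_dotProduct, dotProduct_smul, smul_eq_mul]
    ring
  rw [hterm1, hrow0, hrow1, hA0, hA1, dotProduct_add, hc2, hd, hq]
  ring

lemma bigform_re {N : ℕ} (W B : Matrix (Fin N) (Fin N) ℂ) (hh : Fin N → ℂ)
    (ρ δ γ C ν : ℝ) (a t : ℂ) (v : Fin N → ℂ) :
    ((ρ : ℂ) * (star a * a) + (δ : ℂ) * (star a * t + star t * a)
        + ((C : ℂ) - (ν : ℂ)) * (star t * t)
        + (star (t • hh + v) ⬝ᵥ W *ᵥ (t • hh + v)) / (γ : ℂ)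
        + (ν : ℂ) * (star v ⬝ᵥ B *ᵥ v)).re =
      ρ * (a.re ^ 2 + a.im ^ 2) + 2 * δ * (a.re * t.re + a.im * t.im)
        + (C - ν) * (t.re ^ 2 + t.im ^ 2)
        + (star (t • hh + v) ⬝ᵥ W *ᵥ (t • hh + v)).re / γ
        + ν * (star v ⬝ᵥ B *ᵥ v).re := by
  simp [Complex.add_re, Complex.mul_re, Complex.mul_im, RCLike.star_def,
    Complex.div_ofReal_re]
  ring

lemma quad_aux (ρ δ c : ℝ) (hρ : 0 ≤ ρ) (hc0 : 0 ≤ c) (hδc : δ ^ 2 = ρ * c)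
    (ar ai tr ti : ℝ) :
    0 ≤ ρ * (ar^2 + ai^2) + 2 * δ * (ar * tr + ai * ti) + c * (tr^2 + ti^2) := by
  rcases hρ.lt_or_eq with h0 | h0
  · nlinarith [sq_nonneg (ρ * ar + δ * tr), sq_nonneg (ρ * ai + δ * ti), hδc,
      mul_nonneg hc0 (sq_nonneg tr), mul_nonneg hc0 (sq_nonneg ti)]
  · have hδ : δ = 0 := by nlinarith [hδc, sq_nonneg δ]
    rw [hδ, ← h0]
    nlinarith [mul_nonneg hc0 (add_nonneg (sq_nonneg tr) (sq_nonneg ti))]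

end AuxRobustSchur

set_option maxHeartbeats 1600000 in
/-- The robust 2×2 PSD condition over an ellipsoidal uncertainty set is equivalent to a
single (N+2)×(N+2) LMI with one multiplier `ν` (SINR-side reformulation). -/
theorem robust_schur_sinr_iff_LMI {N : ℕ}
    (W B : Matrix (Fin N) (Fin N) ℂ) (hW : W.PosSemidef) (hB : B.PosSemidef)
    (hh : Fin N → ℂ) (ρ δ γ C : ℝ) (hρ : 0 ≤ ρ) (hγ : 0 < γ) :
    (∀ e : Fin N → ℂ, (star e ⬝ᵥ B *ᵥ e).re ≤ 1 →
        (!![ρ, δ; δ, (star (hh + e) ⬝ᵥ W *ᵥ (hh + e)).re / γ + C] :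
          Matrix (Fin 2) (Fin 2) ℝ).PosSemidef) ↔
      (∃ ν : ℝ, 0 ≤ ν ∧
        (Matrix.fromBlocks
            (!![(ρ : ℂ), (δ : ℂ);
                (δ : ℂ), (star hh ⬝ᵥ W *ᵥ hh) / (γ : ℂ) + (C : ℂ) - (ν : ℂ)] :
              Matrix (Fin 2) (Fin 2) ℂ)
            (Matrix.of fun p j => if p = (0 : Fin 2) then 0 else (star hh ᵥ* W) j / (γ : ℂ))
            (Matrix.of fun j p => if p = (0 : Fin 2) then 0 else (W *ᵥ hh) j / (γ : ℂ))
            ((γ : ℂ)⁻¹ • W + (ν : ℂ) • B)).PosSemidef) := by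
  constructor
  · -- robust condition ⇒ LMI (S-procedure, constructive via convexity)
    intro H
    -- the constant c = δ²/ρ
    set c : ℝ := δ ^ 2 / ρ with hcdef
    have hc0 : 0 ≤ c := div_nonneg (sq_nonneg δ) hρ
    have hb0 : (star (0 : Fin N → ℂ) ⬝ᵥ B *ᵥ (0 : Fin N → ℂ)).re ≤ 1 := by simp
    have hδc : δ ^ 2 = ρ * c := by
      rcases hρ.lt_or_eq with h0 | h0
      · rw [hcdef, mul_div_cancel₀ _ (ne_of_gt h0)]
      · have h := (psd2_facts (H 0 hb0) hρ).2
        rw [← h0] at h ⊢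
        simp only [zero_mul] at h ⊢
        exact le_antisymm h (sq_nonneg δ)
    -- F is the shifted objective, Bu the constraint form
    set Bu : (Fin N → ℂ) → ℝ := fun u => (star u ⬝ᵥ B *ᵥ u).re with hBu
    set F : (Fin N → ℂ) → ℝ :=
      fun u => (star (hh + u) ⬝ᵥ W *ᵥ (hh + u)).re / γ + C - c with hF
    have hφ : ∀ u : Fin N → ℂ, Bu u ≤ 1 → 0 ≤ F u := by
      intro u hu
      have h := psd2_facts (H u hu) hρ
      rcases hρ.lt_or_eq with h0 | h0
      · have h2 := h.2
        simp only [hF, hcdef]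
        rw [sub_nonneg, div_le_iff₀ h0]
        nlinarith [h2]
      · have hδ : δ = 0 := by
          have h2 := h.2
          rw [← h0] at h2
          nlinarith [h2, sq_nonneg δ]
        have hc' : c = 0 := by rw [hcdef, hδ]; norm_num
        simp only [hF, hc']
        have h1 := h.1
        linarith
    -- convexity of F and Bu
    have hBconv : ∀ (a b : ℝ), a + b = 1 → 0 ≤ a → 0 ≤ b → ∀ u v : Fin N → ℂ,
        Bu ((a:ℂ) • u + (b:ℂ) • v) ≤ a * Bu u + b * Bu v := by
      intro a b hab ha hb u v
      exact qf_convex hB a b hab ha hb u v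
    have hFconv : ∀ (a b : ℝ), a + b = 1 → 0 ≤ a → 0 ≤ b → ∀ u v : Fin N → ℂ,
        F ((a:ℂ) • u + (b:ℂ) • v) ≤ a * F u + b * F v := by
      intro a b hab ha hb u v
      have h1 : ((a : ℂ) + b) = 1 := by exact_mod_cast congrArg (Complex.ofReal) hab
      have hsplit : hh + ((a:ℂ) • u + (b:ℂ) • v) = (a:ℂ) • (hh + u) + (b:ℂ) • (hh + v) := by
        calc hh + ((a:ℂ) • u + (b:ℂ) • v)
            = ((a:ℂ) + (b:ℂ)) • hh + ((a:ℂ) • u + (b:ℂ) • v) := by rw [h1, one_smul]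
          _ = (a:ℂ) • (hh + u) + (b:ℂ) • (hh + v) := by
              rw [add_smul, smul_add, smul_add]; abel
      have hq := qf_convex hW a b hab ha hb (hh + u) (hh + v)
      rw [← hsplit] at hq
      simp only [hF]
      have hq' : (star (hh + ((a:ℂ) • u + (b:ℂ) • v)) ⬝ᵥ W *ᵥ
            (hh + ((a:ℂ) • u + (b:ℂ) • v))).re / γ
          ≤ (a * (star (hh + u) ⬝ᵥ W *ᵥ (hh + u)).re
              + b * (star (hh + v) ⬝ᵥ W *ᵥ (hh + v)).re) / γ := by
        gcongr
      rw [add_div, mul_div_assoc, mul_div_assoc] at hq'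
      have hbb : b = 1 - a := by linarith
      subst hbb
      nlinarith [hq']
    -- the multiplier
    set S : Set ℝ := {r | ∃ u : Fin N → ℂ, Bu u < 1 ∧ F u / (1 - Bu u) = r} with hS
    have hBzero : Bu 0 = 0 := by simp [hBu]
    have hSne : S.Nonempty := ⟨F 0 / (1 - Bu 0), 0, by rw [hBzero]; norm_num, rfl⟩
    have hSlb : ∀ r ∈ S, (0:ℝ) ≤ r := by
      rintro r ⟨u, hu, rfl⟩
      exact div_nonneg (hφ u hu.le) (by linarith)
    have hbdd : BddBelow S := ⟨0, fun r hr => hSlb r hr⟩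
    set ν : ℝ := sInf S with hνdef
    have hν0 : 0 ≤ ν := le_csInf hSne hSlb
    have hup : ∀ u : Fin N → ℂ, Bu u < 1 → ν ≤ F u / (1 - Bu u) :=
      fun u hu => csInf_le hbdd ⟨u, hu, rfl⟩
    have hlow : ∀ u : Fin N → ℂ, 1 < Bu u → (-(F u)) / (Bu u - 1) ≤ ν := by
      intro u hu
      refine le_csInf hSne ?_
      rintro r ⟨w, hw, rfl⟩
      set α : ℝ := 1 - Bu w with hα
      set β : ℝ := Bu u - 1 with hβ
      have hα0 : 0 < α := by simp [hα]; linarith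
      have hβ0 : 0 < β := by simp [hβ]; linarith
      have hαβ : 0 < α + β := by linarith
      have hab : β / (α + β) + α / (α + β) = 1 := by
        rw [← add_div, add_comm β α, div_self (ne_of_gt hαβ)]
      have ha' : 0 ≤ β / (α + β) := by positivity
      have hb' : 0 ≤ α / (α + β) := by positivity
      set m : Fin N → ℂ := ((β / (α + β) : ℝ) : ℂ) • w + ((α / (α + β) : ℝ) : ℂ) • u with hm
      have hBm : Bu m ≤ (β / (α + β)) * Bu w + (α / (α + β)) * Bu u :=
        hBconv _ _ hab ha' hb' w u
      have hBm1 : (β / (α + β)) * Bu w + (α / (α + β)) * Bu u = 1 := by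
        have hw' : Bu w = 1 - α := by rw [hα]; ring
        have hu' : Bu u = 1 + β := by rw [hβ]; ring
        rw [hw', hu']
        field_simp
        ring
      have hFm : 0 ≤ F m := hφ m (hBm.trans hBm1.le)
      have hFc : F m ≤ (β / (α + β)) * F w + (α / (α + β)) * F u :=
        hFconv _ _ hab ha' hb' w u
      have hsum : 0 ≤ β * F w + α * F u := by
        have hne : α + β ≠ 0 := ne_of_gt hαβ
        have h2 : 0 ≤ (β / (α + β)) * F w + (α / (α + β)) * F u := le_trans hFm hFc
        have h4 : β * F w + α * F u
            = (α + β) * ((β / (α + β)) * F w + (α / (α + β)) * F u) := by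
          field_simp
        rw [h4]
        exact mul_nonneg hαβ.le h2
      rw [div_le_div_iff₀ hβ0 hα0]
      nlinarith [hsum]
    have hkey : ∀ u : Fin N → ℂ, 0 ≤ F u + ν * (Bu u - 1) := by
      intro u
      rcases lt_trichotomy (Bu u) 1 with h1 | h1 | h1
      · have h2 := hup u h1
        rw [le_div_iff₀ (by linarith : (0:ℝ) < 1 - Bu u)] at h2
        nlinarith [h2]
      · have h2 := hφ u h1.le
        rw [h1]
        simpa using h2
      · have h2 := hlow u h1
        rw [div_le_iff₀ (by linarith : (0:ℝ) < Bu u - 1)] at h2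
        nlinarith [h2]
    -- now build the LMI
    have hsreal : (starRingEnd ℂ) (star hh ⬝ᵥ W *ᵥ hh) = star hh ⬝ᵥ W *ᵥ hh :=
      Complex.conj_eq_iff_im.mpr (herm_form_im hW.1 hh)
    have hvm : star (star hh ᵥ* W) = W *ᵥ hh := by
      rw [star_vecMul, star_star, hW.1.eq]
    have hherm : (Matrix.fromBlocks
          (!![(ρ : ℂ), (δ : ℂ);
              (δ : ℂ), (star hh ⬝ᵥ W *ᵥ hh) / (γ : ℂ) + (C : ℂ) - (ν : ℂ)] :
            Matrix (Fin 2) (Fin 2) ℂ)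
          (Matrix.of fun p j => if p = (0 : Fin 2) then 0 else (star hh ᵥ* W) j / (γ : ℂ))
          (Matrix.of fun j p => if p = (0 : Fin 2) then 0 else (W *ᵥ hh) j / (γ : ℂ))
          ((γ : ℂ)⁻¹ • W + (ν : ℂ) • B)).IsHermitian := by
      apply Matrix.IsHermitian.fromBlocks
      · unfold Matrix.IsHermitian
        ext i j
        fin_cases i <;> fin_cases j <;>
          simp [Matrix.conjTranspose_apply, RCLike.star_def, map_sub, map_add, map_div₀,
            Complex.conj_ofReal, hsreal]
      · ext j p
        simp only [Matrix.conjTranspose_apply, Matrix.of_apply, apply_ite (star : ℂ → ℂ),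
          star_zero, star_div₀]
        have hj : star ((star hh ᵥ* W) j) = (W *ᵥ hh) j := by
          rw [← Pi.star_apply, hvm]
        rw [hj]
        simp [RCLike.star_def, Complex.conj_ofReal]
      · unfold Matrix.IsHermitian
        simp [Matrix.conjTranspose_add, Matrix.conjTranspose_smul, hW.1.eq, hB.1.eq,
          star_inv₀, RCLike.star_def, Complex.conj_ofReal]
    refine ⟨ν, hν0, .of_dotProduct_mulVec_nonneg hherm ?_⟩
    · -- form nonneg
      intro x
      rw [Complex.nonneg_iff]
      refine ⟨?_, (herm_form_im hherm x).symm⟩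
      obtain ⟨a, t, v, hx⟩ : ∃ a t v, x = Sum.elim ![a, t] v :=
        ⟨x (Sum.inl 0), x (Sum.inl 1), fun j => x (Sum.inr j), by
          funext i
          rcases i with i | i
          · fin_cases i <;> rfl
          · rfl⟩
      rw [hx, bigform, bigform_re]
      have hquad := quad_aux ρ δ c hρ hc0 hδc
      by_cases ht : t = 0
      · have h1 : 0 ≤ (star v ⬝ᵥ W *ᵥ v).re := (Complex.nonneg_iff.mp (hW.dotProduct_mulVec_nonneg v)).1
        have h2 : 0 ≤ (star v ⬝ᵥ B *ᵥ v).re := (Complex.nonneg_iff.mp (hB.dotProduct_mulVec_nonneg v)).1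
        rw [ht]
        simp only [Complex.zero_re, Complex.zero_im, zero_smul, zero_add]
        nlinarith [mul_nonneg hρ (add_nonneg (sq_nonneg a.re) (sq_nonneg a.im)),
          div_nonneg h1 hγ.le, mul_nonneg hν0 h2]
      · obtain ⟨u, hvu⟩ : ∃ u, v = t • u := ⟨t⁻¹ • v, (smul_inv_smul₀ ht v).symm⟩
        rw [hvu, ← smul_add, qf_csmul W, qf_csmul B, star_mul_self_c,
          Complex.re_ofReal_mul, Complex.re_ofReal_mul, mul_div_assoc]
        have hk := hkey u
        simp only [hF, hBu] at hk
        have hq := hquad a.re a.im t.re t.im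
        nlinarith [hq, mul_nonneg (add_nonneg (sq_nonneg t.re) (sq_nonneg t.im)) hk, hγ]
  · -- LMI ⇒ robust condition
    rintro ⟨ν, hν, hM⟩
    intro e he
    have key : ∀ x y : ℝ, 0 ≤ ρ * x ^ 2 + 2 * δ * x * y
        + ((star (hh + e) ⬝ᵥ W *ᵥ (hh + e)).re / γ + C) * y ^ 2 := by
      intro x y
      have h0 := hM.dotProduct_mulVec_nonneg (Sum.elim ![(x:ℂ), (y:ℂ)] ((y:ℂ) • e))
      rw [bigform] at h0
      have h1 := (Complex.nonneg_iff.mp h0).1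
      rw [bigform_re] at h1
      have hsm : (y:ℂ) • hh + (y:ℂ) • e = (y:ℂ) • (hh + e) := (smul_add _ _ _).symm
      rw [hsm, qf_csmul W, qf_csmul B, star_mul_self_c, Complex.re_ofReal_mul,
        Complex.re_ofReal_mul] at h1
      simp only [Complex.ofReal_re, Complex.ofReal_im] at h1
      rw [mul_div_assoc] at h1
      nlinarith [h1, mul_nonneg (mul_nonneg hν (sq_nonneg y))
        (sub_nonneg.mpr he), hγ]
    refine Matrix.PosSemidef.of_dotProduct_mulVec_nonneg ?_ ?_
    · unfold Matrix.IsHermitian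
      ext i j
      fin_cases i <;> fin_cases j <;> simp [Matrix.conjTranspose_apply]
    · intro z
      rw [form2]
      exact key (z 0) (z 1)
end

section
/- Let W and B be N×N Hermitian positive semidefinite complex matrices, ĥ ∈ ℂᴺ, and t̄ ∈ ℝ. Then (ĥ+e)ᴴ W (ĥ+e) ≤ t̄ for every e ∈ ℂᴺ with eᴴ B e ≤ 1, if and only if there exists λ ≥ 0 such that the (N+1)×(N+1) Hermitian block matrix [[−W + λB, −Wĥ], [−ĥᴴW, t̄ − ĥᴴWĥ − λ]] is positive semidefinite. -/
open Matrix ComplexOrder Complex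
noncomputable section SLemmaAux
set_option linter.unusedSectionVars false
variable {n : Type*} [Fintype n]

def qf (A : Matrix n n ℂ) (x : n → ℂ) : ℝ := (star x ⬝ᵥ A *ᵥ x).re

lemma conj_form {A : Matrix n n ℂ} (hA : A.IsHermitian) (x y : n → ℂ) :
    (starRingEnd ℂ) (star x ⬝ᵥ A *ᵥ y) = star y ⬝ᵥ A *ᵥ x := by
  have h1 : (starRingEnd ℂ) (star x ⬝ᵥ A *ᵥ y) = star (A *ᵥ y) ⬝ᵥ x := by
    rw [show ((starRingEnd ℂ) (star x ⬝ᵥ A *ᵥ y)) = star (star x ⬝ᵥ A *ᵥ y) from rfl,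
      ← star_dotProduct_star, star_star]
  rw [h1, star_mulVec, hA.eq, ← dotProduct_mulVec]

lemma qf_add {A : Matrix n n ℂ} (hA : A.IsHermitian) (x y : n → ℂ) :
    qf A (x + y) = qf A x + qf A y + 2 * (star x ⬝ᵥ A *ᵥ y).re := by
  unfold qf
  rw [mulVec_add, star_add, add_dotProduct, dotProduct_add, dotProduct_add]
  have : (star y ⬝ᵥ A *ᵥ x) = (starRingEnd ℂ) (star x ⬝ᵥ A *ᵥ y) := (conj_form hA x y).symm
  simp only [Complex.add_re, this, Complex.conj_re]
  ring

lemma qf_smul (A : Matrix n n ℂ) (t : ℝ) (x : n → ℂ) :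
    qf A ((t : ℂ) • x) = t ^ 2 * qf A x := by
  unfold qf
  rw [mulVec_smul, star_smul, smul_dotProduct, dotProduct_smul]
  simp only [star_trivial, smul_eq_mul, ← mul_assoc, smul_smul]
  rw [show star (t:ℂ) * (t:ℂ) = ((t^2 : ℝ) : ℂ) by
    rw [show star (t:ℂ) = (t:ℂ) from by simp [Complex.conj_ofReal]]; push_cast; ring]
  simp [Complex.mul_re, ← Complex.ofReal_pow, Complex.ofReal_re, Complex.ofReal_im]

lemma cross_smul (A : Matrix n n ℂ) (x y : n → ℂ) (v : ℂ) :
    star x ⬝ᵥ A *ᵥ (v • y) = v * (star x ⬝ᵥ A *ᵥ y) := by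
  rw [mulVec_smul, dotProduct_smul]; rfl

lemma qf_unit_smul (A : Matrix n n ℂ) (y : n → ℂ) (v : ℂ) (hv : ‖v‖ = 1) :
    qf A (v • y) = qf A y := by
  unfold qf
  rw [mulVec_smul, star_smul, smul_dotProduct, dotProduct_smul]
  simp only [smul_eq_mul, ← mul_assoc, smul_smul]
  rw [show (star v * v : ℂ) = 1 by
    rw [show star v = (starRingEnd ℂ) v from rfl, ← Complex.normSq_eq_conj_mul_self,
      ← Complex.sq_norm, hv]; norm_num]
  rw [one_mul]

/-- The key mixing lemma: if `f x = f y = s ≠ 0` and `g x = - g y`, then some `z`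
has `f z = s` and `g z = 0`. -/
lemma zero_mix {A C : Matrix n n ℂ} (hA : A.IsHermitian) (hC : C.IsHermitian)
    (x y : n → ℂ) (s : ℝ) (hs : s ≠ 0) (hfx : qf A x = s) (hfy : qf A y = s)
    (hg : qf C x = - qf C y) : ∃ z, qf A z = s ∧ qf C z = 0 := by
  set a : ℂ := star x ⬝ᵥ A *ᵥ y with ha
  set c : ℂ := star x ⬝ᵥ C *ᵥ y with hc
  -- pick u with |u| = 1 and Re (u * c) = 0
  obtain ⟨u, hu1, huc⟩ : ∃ u : ℂ, ‖u‖ = 1 ∧ (u * c).re = 0 := by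
    by_cases h0 : c = 0
    · exact ⟨1, by simp, by simp [h0]⟩
    · refine ⟨Complex.I * (starRingEnd ℂ) c / (‖c‖ : ℂ), ?_, ?_⟩
      · rw [norm_div, norm_mul]
        simp [h0]
      · have : Complex.I * (starRingEnd ℂ) c / (‖c‖ : ℂ) * c
            = Complex.I * ((Complex.normSq c : ℝ) / (‖c‖ : ℝ) : ℝ) := by
          push_cast
          rw [div_mul_eq_mul_div, mul_assoc, mul_comm ((starRingEnd ℂ) c) c,
            Complex.mul_conj, mul_div_assoc]
        rw [this]
        simp [Complex.mul_re]
  -- pick sign so that s * Re (v * a) ≥ 0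
  set v : ℂ := if 0 ≤ s * (u * a).re then u else -u with hv
  have hv1 : ‖v‖ = 1 := by
    rw [hv]; split <;> simp [hu1]
  have hvc : (v * c).re = 0 := by
    rw [hv]; split <;> simp [huc, neg_mul]
  have hva : 0 ≤ s * (v * a).re := by
    rw [hv]; split
    · assumption
    · rw [neg_mul, Complex.neg_re, mul_neg]; linarith [lt_of_not_ge (by assumption : ¬ _)]
  set z₀ : n → ℂ := x + v • y with hz₀
  have hfz₀ : qf A z₀ = 2 * s + 2 * (v * a).re := by
    rw [hz₀, qf_add hA, qf_unit_smul A y v hv1, hfx, hfy, cross_smul, ← ha]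
    ring
  have hgz₀ : qf C z₀ = 0 := by
    rw [hz₀, qf_add hC, qf_unit_smul C y v hv1, hg, cross_smul, ← hc, hvc]
    ring
  have hpos : 0 < s * qf A z₀ := by
    rw [hfz₀]
    have : 0 < s * s := by rcases hs.lt_or_gt with h|h <;> nlinarith
    nlinarith
  have hz₀ne : qf A z₀ ≠ 0 := by
    intro h; rw [h] at hpos; simp at hpos
  have hdivpos : 0 < s / qf A z₀ := by
    rcases lt_trichotomy s 0 with h | h | h
    · have : qf A z₀ < 0 := by nlinarith
      exact div_pos_iff.mpr (Or.inr ⟨h, this⟩)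
    · exact absurd h hs
    · have : 0 < qf A z₀ := by nlinarith
      exact div_pos h this
  refine ⟨(Real.sqrt (s / qf A z₀) : ℂ) • z₀, ?_, ?_⟩
  · rw [qf_smul, Real.sq_sqrt hdivpos.le, div_mul_cancel₀ _ hz₀ne]
  · rw [qf_smul, hgz₀, mul_zero]

lemma qf_matrix_add (A B : Matrix n n ℂ) (x : n → ℂ) :
    qf (A + B) x = qf A x + qf B x := by
  unfold qf; rw [add_mulVec, dotProduct_add]; simp

lemma qf_matrix_smul (t : ℝ) (A : Matrix n n ℂ) (x : n → ℂ) :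
    qf ((t : ℂ) • A) x = t * qf A x := by
  unfold qf
  rw [smul_mulVec, dotProduct_smul]
  simp [Complex.mul_re, Complex.smul_re]

lemma smul_real_isHermitian {A : Matrix n n ℂ} (hA : A.IsHermitian) (t : ℝ) :
    ((t:ℂ) • A).IsHermitian := by
  unfold Matrix.IsHermitian
  rw [conjTranspose_smul, hA.eq]
  congr 1
  simp

lemma midpoint_mem {A C : Matrix n n ℂ} (hA : A.IsHermitian) (hC : C.IsHermitian)
    (x y : n → ℂ) :
    ∃ z, qf A z = (qf A x + qf A y) / 2 ∧ qf C z = (qf C x + qf C y) / 2 := by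
  set p1 := qf A x with hp1
  set p2 := qf C x with hp2
  set q1 := qf A y with hq1
  set q2 := qf C y with hq2
  by_cases hd : p1 * q2 - p2 * q1 = 0
  · -- dependent case
    by_cases hp : p1 = 0 ∧ p2 = 0
    · refine ⟨(Real.sqrt (1/2) : ℂ) • y, ?_, ?_⟩ <;>
        rw [qf_smul, Real.sq_sqrt (by norm_num : (0:ℝ) ≤ 1/2)]
      · rw [← hq1, hp.1]; ring
      · rw [← hq2, hp.2]; ring
    · -- p ≠ 0, write q = r • p
      obtain ⟨r, hr1, hr2⟩ : ∃ r : ℝ, q1 = r * p1 ∧ q2 = r * p2 := by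
        by_cases h1 : p1 = 0
        · have h2 : p2 ≠ 0 := fun h => hp ⟨h1, h⟩
          refine ⟨q2 / p2, ?_, by field_simp⟩
          have hq10 : q1 = 0 := by
            have : p2 * q1 = 0 := by rw [h1] at hd; linarith
            rcases mul_eq_zero.mp this with h | h
            · exact absurd h h2
            · exact h
          rw [hq10, h1]; ring
        · refine ⟨q1 / p1, by field_simp, ?_⟩
          field_simp
          nlinarith [hd]
      by_cases hsg : 0 ≤ (1 + r) / 2
      · refine ⟨(Real.sqrt ((1+r)/2) : ℂ) • x, ?_, ?_⟩ <;>
          rw [qf_smul, Real.sq_sqrt hsg]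
        · rw [← hp1, hr1]; ring
        · rw [← hp2, hr2]; ring
      · have hrneg : r < -1 := by nlinarith [lt_of_not_ge hsg]
        have hr0 : r ≠ 0 := by linarith
        have hpos : 0 ≤ (1 + r) / (2 * r) := by
          apply le_of_lt
          apply div_pos_iff.mpr
          right
          constructor <;> linarith
        refine ⟨(Real.sqrt ((1+r)/(2*r)) : ℂ) • y, ?_, ?_⟩ <;>
          rw [qf_smul, Real.sq_sqrt hpos]
        · rw [← hq1, hr1]; field_simp
        · rw [← hq2, hr2]; field_simp
  · -- independent case
    set d := p1 * q2 - p2 * q1 with hdd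
    set A' := ((q2 - p2 : ℝ) : ℂ) • A + ((p1 - q1 : ℝ) : ℂ) • C with hA'
    set C' := ((q2 + p2 : ℝ) : ℂ) • A + ((-(p1 + q1) : ℝ) : ℂ) • C with hC'
    have hA'H : A'.IsHermitian := (smul_real_isHermitian hA _).add (smul_real_isHermitian hC _)
    have hC'H : C'.IsHermitian := (smul_real_isHermitian hA _).add (smul_real_isHermitian hC _)
    have eqf : ∀ w : n → ℂ, qf A' w = (q2 - p2) * qf A w + (p1 - q1) * qf C w := fun w => by
      rw [hA', qf_matrix_add, qf_matrix_smul, qf_matrix_smul]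
    have eqg : ∀ w : n → ℂ, qf C' w = (q2 + p2) * qf A w + (-(p1 + q1)) * qf C w := fun w => by
      rw [hC', qf_matrix_add, qf_matrix_smul, qf_matrix_smul]
    have hfx' : qf A' x = d := by rw [eqf, ← hp1, ← hp2, hdd]; ring
    have hfy' : qf A' y = d := by rw [eqf, ← hq1, ← hq2, hdd]; ring
    have hgx' : qf C' x = - qf C' y := by rw [eqg, eqg, ← hp1, ← hp2, ← hq1, ← hq2]; ring
    obtain ⟨z, hz1, hz2⟩ := zero_mix hA'H hC'H x y d hd hfx' hfy' hgx'
    refine ⟨z, ?_, ?_⟩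
    · set u := qf A z
      set w := qf C z
      have e1 : (q2 - p2) * u + (p1 - q1) * w = d := by rw [← eqf]; exact hz1
      have e2 : (q2 + p2) * u + (-(p1 + q1)) * w = 0 := by rw [← eqg]; exact hz2
      have key : d * (2 * u - (p1 + q1)) = 0 := by
        rw [hdd]; linear_combination (p1 + q1) * e1 + (p1 - q1) * e2
      rcases mul_eq_zero.mp key with h | h
      · exact absurd h hd
      · linarith
    · set u := qf A z
      set w := qf C z
      have e1 : (q2 - p2) * u + (p1 - q1) * w = d := by rw [← eqf]; exact hz1
      have e2 : (q2 + p2) * u + (-(p1 + q1)) * w = 0 := by rw [← eqg]; exact hz2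
      have key : d * (2 * w - (p2 + q2)) = 0 := by
        rw [hdd]; linear_combination (q2 + p2) * e1 - (q2 - p2) * e2
      rcases mul_eq_zero.mp key with h | h
      · exact absurd h hd
      · linarith

def qrange (A C : Matrix n n ℂ) : Set (ℝ × ℝ) :=
  {p | ∃ x : n → ℂ, qf A x = p.1 ∧ qf C x = p.2}

lemma qrange_smul_mem {A C : Matrix n n ℂ} {p : ℝ × ℝ} (hp : p ∈ qrange A C)
    {t : ℝ} (ht : 0 ≤ t) : (t * p.1, t * p.2) ∈ qrange A C := by
  obtain ⟨x, hx1, hx2⟩ := hp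
  exact ⟨(Real.sqrt t : ℂ) • x, by rw [qf_smul, Real.sq_sqrt ht, hx1],
    by rw [qf_smul, Real.sq_sqrt ht, hx2]⟩

lemma qrange_convex {A C : Matrix n n ℂ} (hA : A.IsHermitian) (hC : C.IsHermitian) :
    Convex ℝ (qrange A C) := by
  intro p hp q hq a b ha hb hab
  obtain ⟨x, hx1, hx2⟩ := qrange_smul_mem hp (by linarith : (0:ℝ) ≤ 2 * a)
  obtain ⟨y, hy1, hy2⟩ := qrange_smul_mem hq (by linarith : (0:ℝ) ≤ 2 * b)
  obtain ⟨z, hz1, hz2⟩ := midpoint_mem hA hC x y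
  refine ⟨z, ?_, ?_⟩
  · rw [hz1, hx1, hy1]; simp [Prod.smul_fst]; ring
  · rw [hz2, hx2, hy2]; simp [Prod.smul_snd]; ring

/-- The complex S-lemma. -/
theorem slemma {A C : Matrix n n ℂ} (hA : A.IsHermitian) (hC : C.IsHermitian)
    (x₀ : n → ℂ) (hx₀ : qf C x₀ < 0) (H : ∀ x, qf C x ≤ 0 → qf A x ≤ 0) :
    ∃ l : ℝ, 0 ≤ l ∧ ∀ x, qf A x ≤ l * qf C x := by
  set O : Set (ℝ × ℝ) := Set.Ioi (0:ℝ) ×ˢ Set.Iio (0:ℝ) with hO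
  have hOopen : IsOpen O := isOpen_Ioi.prod isOpen_Iio
  have hOconv : Convex ℝ O := (convex_Ioi (0:ℝ)).prod (convex_Iio (0:ℝ))
  have hdisj : Disjoint O (qrange A C) := by
    rw [Set.disjoint_left]
    rintro ⟨p1, p2⟩ ⟨h1, h2⟩ ⟨x, hx1, hx2⟩
    simp only [Set.mem_Ioi, Set.mem_Iio] at h1 h2
    have := H x (by rw [hx2]; exact h2.le)
    rw [hx1] at this
    exact absurd h1 (not_lt.mpr this)
  obtain ⟨f, u, hfO, hfS⟩ := geometric_hahn_banach_open hOconv hOopen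
    (qrange_convex hA hC) hdisj
  have hzS : ((0:ℝ), (0:ℝ)) ∈ qrange A C := ⟨0, by simp [qf], by simp [qf]⟩
  have hu0 : u ≤ 0 := by
    have := hfS _ hzS
    rwa [show ((0:ℝ), (0:ℝ)) = (0 : ℝ × ℝ) from rfl, map_zero] at this
  have h0u : 0 ≤ u := by
    by_contra h
    push_neg at h
    set K := f ((1:ℝ), (-1:ℝ)) with hK
    have hεO : ∀ ε : ℝ, 0 < ε → ε * K < u := by
      intro ε hε
      have hmem : ((ε, -ε) : ℝ × ℝ) ∈ O := by
        constructor <;> simp [hε, neg_neg_iff_pos.mpr hε]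
      have := hfO _ hmem
      have heq : ((ε, -ε) : ℝ × ℝ) = ε • ((1:ℝ), (-1:ℝ)) := by
        simp [Prod.ext_iff]
      rw [heq, f.map_smul] at this
      simpa using this
    rcases le_or_gt 0 K with hK0 | hK0
    · have := hεO 1 one_pos; nlinarith
    · have hεpos : 0 < u / (2 * K) := div_pos_iff.mpr (Or.inr ⟨h, by linarith⟩)
      have h2 := hεO _ hεpos
      have : u / (2 * K) * K = u / 2 := by
        field_simp [ne_of_lt hK0]
      rw [this] at h2
      linarith
  have hu : u = 0 := le_antisymm hu0 h0u
  set a := f ((1:ℝ), (0:ℝ)) with haf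
  set b := f ((0:ℝ), (1:ℝ)) with hbf
  have hf : ∀ p : ℝ × ℝ, f p = p.1 * a + p.2 * b := by
    intro p
    have hp : p = p.1 • ((1:ℝ), (0:ℝ)) + p.2 • ((0:ℝ), (1:ℝ)) := by
      simp [Prod.ext_iff]
    rw [hp, map_add, f.map_smul, f.map_smul]
    simp [smul_eq_mul, haf, hbf]
  have hS' : ∀ x : n → ℂ, 0 ≤ qf A x * a + qf C x * b := by
    intro x
    have := hfS (qf A x, qf C x) ⟨x, rfl, rfl⟩
    rw [hf, hu] at this
    simpa using this
  have hO' : ∀ p1 p2 : ℝ, 0 < p1 → p2 < 0 → p1 * a + p2 * b < 0 := by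
    intro p1 p2 h1 h2
    have := hfO (p1, p2) ⟨Set.mem_Ioi.mpr h1, Set.mem_Iio.mpr h2⟩
    rw [hf, hu] at this
    simpa using this
  have hb0 : 0 ≤ b := by
    by_contra hb
    push_neg at hb
    rcases le_or_gt 0 a with ha | ha
    · have := hO' 1 (-1) one_pos (by norm_num)
      nlinarith
    · have hε : 0 < b / (2 * a) := div_pos_iff.mpr (Or.inr ⟨hb, by linarith⟩)
      have h2 := hO' _ (-1) hε (by norm_num)
      have he : b / (2 * a) * a = b / 2 := by
        field_simp [ne_of_lt ha]
      rw [he] at h2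
      linarith
  have ha0 : a ≤ 0 := by
    by_contra ha
    push_neg at ha
    rcases le_or_gt b 0 with hb | hb
    · have := hO' 1 (-1) one_pos (by norm_num)
      nlinarith
    · have hε : 0 < a / (2 * b) := div_pos (by linarith) (by linarith)
      have h2 := hO' 1 (-(a / (2 * b))) one_pos (neg_lt_zero.mpr hε)
      have he : -(a / (2 * b)) * b = -(a / 2) := by
        field_simp
      rw [he] at h2
      linarith
  rcases eq_or_lt_of_le ha0 with haz | haneg
  · -- a = 0 ⇒ contradiction with Slater point
    exfalso
    have hbpos : 0 < b := by
      have := hO' 1 (-1) one_pos (by norm_num)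
      nlinarith
    have h3 := hS' x₀
    rw [haz] at h3
    simp at h3
    nlinarith
  · refine ⟨b / (-a), div_nonneg hb0 (by linarith), ?_⟩
    intro x
    have h1 := hS' x
    rw [div_mul_eq_mul_div, le_div_iff₀ (by linarith : (0:ℝ) < -a)]
    nlinarith
lemma form_smul (A : Matrix n n ℂ) (x y : n → ℂ) (u v : ℂ) :
    star (u • x) ⬝ᵥ A *ᵥ (v • y) = star u * v * (star x ⬝ᵥ A *ᵥ y) := by
  rw [mulVec_smul, dotProduct_smul, star_smul, smul_dotProduct]
  simp only [smul_eq_mul]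
  ring

lemma re_real_mul (r : ℝ) (z : ℂ) : ((r : ℂ) * z).re = r * z.re := by
  simp [Complex.mul_re]

end SLemmaAux

section BlockForm

variable {N : ℕ}

lemma sum_elim_comp_inl (e : Fin N → ℂ) (τ : ℂ) :
    (Sum.elim e (fun _ : Unit => τ)) ∘ Sum.inl = e := rfl

lemma star_sum_elim (e : Fin N → ℂ) (τ : ℂ) :
    star (Sum.elim e (fun _ : Unit => τ)) =
      Sum.elim (star e) (fun _ : Unit => star τ) := by
  funext i
  rcases i with i | i <;> rfl

lemma block_form (P : Matrix (Fin N) (Fin N) ℂ) (cl rw : Fin N → ℂ) (s : ℂ)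
    (e : Fin N → ℂ) (τ : ℂ) :
    star (Sum.elim e (fun _ : Unit => τ)) ⬝ᵥ
      (Matrix.fromBlocks P (Matrix.of fun i (_ : Unit) => cl i)
        (Matrix.of fun (_ : Unit) j => rw j) (Matrix.of fun (_ : Unit) (_ : Unit) => s)) *ᵥ
      (Sum.elim e (fun _ : Unit => τ))
    = star e ⬝ᵥ P *ᵥ e + τ * (star e ⬝ᵥ cl) + star τ * (rw ⬝ᵥ e) + star τ * τ * s := by
  rw [fromBlocks_mulVec, star_sum_elim, sumElim_dotProduct_sumElim]
  rw [sum_elim_comp_inl]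
  have h1 : (Matrix.of fun i (_ : Unit) => cl i) *ᵥ
      ((Sum.elim e fun _ : Unit => τ) ∘ Sum.inr) = fun i => cl i * τ := by
    funext i
    simp [Matrix.mulVec, dotProduct]
  have h2 : (Matrix.of fun (_ : Unit) j => rw j) *ᵥ e = fun _ : Unit => rw ⬝ᵥ e := by
    funext i
    simp [Matrix.mulVec, dotProduct]
  have h3 : (Matrix.of fun (_ : Unit) (_ : Unit) => s) *ᵥ
      ((Sum.elim e fun _ : Unit => τ) ∘ Sum.inr) = fun _ : Unit => s * τ := by
    funext i
    simp [Matrix.mulVec, dotProduct]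
  rw [h1, h2, h3, dotProduct_add, dotProduct_add]
  have h4 : (star e ⬝ᵥ fun i => cl i * τ) = τ * (star e ⬝ᵥ cl) := by
    simp [dotProduct, Finset.mul_sum]
    exact Finset.sum_congr rfl fun k _ => by ring
  have h5 : ((fun _ : Unit => star τ) ⬝ᵥ fun _ : Unit => rw ⬝ᵥ e) = star τ * (rw ⬝ᵥ e) := by
    simp [dotProduct]
  have h6 : ((fun _ : Unit => star τ) ⬝ᵥ fun _ : Unit => s * τ) = star τ * τ * s := by
    simp [dotProduct]
    ring
  rw [h4, h5, h6]
  ring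

lemma expand_quad {W : Matrix (Fin N) (Fin N) ℂ} (hh e : Fin N → ℂ) :
    star (hh + e) ⬝ᵥ W *ᵥ (hh + e) =
      star hh ⬝ᵥ W *ᵥ hh + star hh ⬝ᵥ W *ᵥ e + star e ⬝ᵥ W *ᵥ hh + star e ⬝ᵥ W *ᵥ e := by
  rw [mulVec_add, star_add, add_dotProduct, dotProduct_add, dotProduct_add]
  ring

end BlockForm

/-- LMI reformulation, via the complex S-lemma, of a worst-case quadratic upper-bound
constraint over an ellipsoidal uncertainty set. -/
theorem worst_case_upper_bound_iff_LMI {N : ℕ}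
    (W B : Matrix (Fin N) (Fin N) ℂ) (hW : W.PosSemidef) (hB : B.PosSemidef)
    (hh : Fin N → ℂ) (tb : ℝ) :
    (∀ e : Fin N → ℂ, (star e ⬝ᵥ B *ᵥ e).re ≤ 1 →
        (star (hh + e) ⬝ᵥ W *ᵥ (hh + e)).re ≤ tb) ↔
      (∃ lam : ℝ, 0 ≤ lam ∧
        (Matrix.fromBlocks (-W + (lam : ℂ) • B)
            (Matrix.of fun i (_ : Unit) => -((W *ᵥ hh) i))
            (Matrix.of fun (_ : Unit) j => -((star hh ᵥ* W) j))
            (Matrix.of fun (_ : Unit) (_ : Unit) =>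
              (tb : ℂ) - star hh ⬝ᵥ W *ᵥ hh - (lam : ℂ))).PosSemidef) := by
  classical
  have hWH : W.IsHermitian := hW.1
  have hBH : B.IsHermitian := hB.1
  set A : Matrix (Fin N ⊕ Unit) (Fin N ⊕ Unit) ℂ :=
    Matrix.fromBlocks W (Matrix.of fun i (_ : Unit) => (W *ᵥ hh) i)
      (Matrix.of fun (_ : Unit) j => (star hh ᵥ* W) j)
      (Matrix.of fun (_ : Unit) (_ : Unit) => star hh ⬝ᵥ W *ᵥ hh - (tb : ℂ)) with hAdef
  set C : Matrix (Fin N ⊕ Unit) (Fin N ⊕ Unit) ℂ :=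
    Matrix.fromBlocks B (Matrix.of fun i (_ : Unit) => (0:ℂ))
      (Matrix.of fun (_ : Unit) j => (0:ℂ))
      (Matrix.of fun (_ : Unit) (_ : Unit) => (-1 : ℂ)) with hCdef
  -- basic entry fact for Hermitian W
  have hWentry : ∀ i k, (starRingEnd ℂ) (W k i) = W i k := by
    intro i k
    have := congrFun (congrFun hWH i) k
    simpa [Matrix.conjTranspose_apply] using this
  have hrowconj : ∀ i, (starRingEnd ℂ) ((star hh ᵥ* W) i) = (W *ᵥ hh) i := by
    intro i
    simp only [Matrix.vecMul, Matrix.mulVec, dotProduct, Pi.star_apply, map_sum]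
    refine Finset.sum_congr rfl fun k _ => ?_
    rw [RingHom.map_mul]
    rw [show (starRingEnd ℂ) (star (hh k)) = hh k by simp]
    rw [hWentry i k]
    ring
  have hAH : A.IsHermitian := by
    rw [Matrix.IsHermitian, hAdef]
    ext i j
    rcases i with i | i <;> rcases j with j | j <;>
      simp only [Matrix.conjTranspose_apply, Matrix.fromBlocks, Matrix.of_apply,
        Sum.elim_inl, Sum.elim_inr]
    · exact hWentry i j
    · exact hrowconj i
    · rw [show star ((W *ᵥ hh) j) = (starRingEnd ℂ) ((W *ᵥ hh) j) from rfl, ← hrowconj j]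
      simp
    · rw [show star (star hh ⬝ᵥ W *ᵥ hh - (tb:ℂ)) =
        (starRingEnd ℂ) (star hh ⬝ᵥ W *ᵥ hh - (tb:ℂ)) from rfl]
      rw [map_sub, conj_form hWH hh hh]
      simp [Complex.conj_ofReal]
  have hCH : C.IsHermitian := by
    rw [Matrix.IsHermitian, hCdef]
    ext i j
    rcases i with i | i <;> rcases j with j | j <;>
      simp only [Matrix.conjTranspose_apply, Matrix.fromBlocks, Matrix.of_apply,
        Sum.elim_inl, Sum.elim_inr]
    · exact congrFun (congrFun hBH i) j ▸ (by
        have := congrFun (congrFun hBH.eq i) j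
        simpa [Matrix.conjTranspose_apply] using this)
    · simp
    · simp
    · simp
  -- the LMI matrix equals -A + lam • C
  have hG : ∀ lam : ℝ,
      (Matrix.fromBlocks (-W + (lam : ℂ) • B)
        (Matrix.of fun i (_ : Unit) => -((W *ᵥ hh) i))
        (Matrix.of fun (_ : Unit) j => -((star hh ᵥ* W) j))
        (Matrix.of fun (_ : Unit) (_ : Unit) =>
          (tb : ℂ) - star hh ⬝ᵥ W *ᵥ hh - (lam : ℂ))) = -A + (lam : ℂ) • C := by
    intro lam
    rw [hAdef, hCdef]
    ext i j
    rcases i with i | i <;> rcases j with j | j <;>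
      simp [Matrix.fromBlocks, Matrix.add_apply, Matrix.neg_apply, Matrix.smul_apply,
        Matrix.of_apply, smul_eq_mul] <;> ring
  -- form evaluations
  have hAeval : ∀ (e : Fin N → ℂ) (τ : ℂ),
      star (Sum.elim e (fun _ : Unit => τ)) ⬝ᵥ A *ᵥ (Sum.elim e (fun _ : Unit => τ))
        = star e ⬝ᵥ W *ᵥ e + τ * (star e ⬝ᵥ W *ᵥ hh)
          + star τ * (star hh ⬝ᵥ W *ᵥ e) + star τ * τ * (star hh ⬝ᵥ W *ᵥ hh - (tb:ℂ)) := by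
    intro e τ
    rw [hAdef, block_form]
    rw [show ((star hh ᵥ* W) ⬝ᵥ e) = star hh ⬝ᵥ W *ᵥ e from (dotProduct_mulVec _ _ _).symm]
  have hCeval : ∀ (e : Fin N → ℂ) (τ : ℂ),
      star (Sum.elim e (fun _ : Unit => τ)) ⬝ᵥ C *ᵥ (Sum.elim e (fun _ : Unit => τ))
        = star e ⬝ᵥ B *ᵥ e + star τ * τ * (-1 : ℂ) := by
    intro e τ
    rw [hCdef, block_form]
    simp
  -- every vector splits
  have hsplit : ∀ x : Fin N ⊕ Unit → ℂ,
      x = Sum.elim (x ∘ Sum.inl) (fun _ : Unit => x (Sum.inr ())) := by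
    intro x
    funext i
    rcases i with i | ⟨⟩ <;> rfl
  constructor
  · -- forward direction
    intro H
    have H' : ∀ x, qf C x ≤ 0 → qf A x ≤ 0 := by
      intro x hx
      rw [hsplit x] at hx ⊢
      set e' := x ∘ Sum.inl with he'
      set τ := x (Sum.inr ()) with hτ
      by_cases hτ0 : τ = 0
      · -- boundedness of the quadratic in t
        rw [qf, hCeval, hτ0] at hx
        rw [qf, hAeval, hτ0]
        simp only [map_zero, zero_mul, mul_zero, star_zero, add_zero] at hx ⊢
        set α := (star hh ⬝ᵥ W *ᵥ hh).re with hα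
        set β := (star hh ⬝ᵥ W *ᵥ e').re + (star e' ⬝ᵥ W *ᵥ hh).re with hβ
        set γ := (star e' ⬝ᵥ W *ᵥ e').re with hγ
        have hq : ∀ t : ℝ, α + t * β + t^2 * γ ≤ tb := by
          intro t
          have hpre : (star ((t:ℂ) • e') ⬝ᵥ B *ᵥ ((t:ℂ) • e')).re ≤ 1 := by
            rw [form_smul]
            rw [show star (t:ℂ) = (t:ℂ) by simp [Complex.conj_ofReal]]
            rw [show ((t:ℂ) * (t:ℂ)) = ((t^2 : ℝ) : ℂ) by push_cast; ring]
            rw [re_real_mul]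
            nlinarith [sq_nonneg t, hx]
          have hcon := H ((t:ℂ) • e') hpre
          rw [expand_quad] at hcon
          rw [show star hh ⬝ᵥ W *ᵥ ((t:ℂ) • e') = (t:ℂ) * (star hh ⬝ᵥ W *ᵥ e') from by
            rw [mulVec_smul, dotProduct_smul]; rfl] at hcon
          rw [show star ((t:ℂ) • e') ⬝ᵥ W *ᵥ hh = (t:ℂ) * (star e' ⬝ᵥ W *ᵥ hh) from by
            rw [star_smul, smul_dotProduct]
            rw [show star (t:ℂ) = (t:ℂ) by simp [Complex.conj_ofReal]]; rfl] at hcon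
          rw [show star ((t:ℂ) • e') ⬝ᵥ W *ᵥ ((t:ℂ) • e')
              = ((t^2:ℝ):ℂ) * (star e' ⬝ᵥ W *ᵥ e') from by
            rw [form_smul]
            rw [show star (t:ℂ) = (t:ℂ) by simp [Complex.conj_ofReal]]
            push_cast; ring] at hcon
          simp only [Complex.add_re, re_real_mul] at hcon
          rw [hα, hβ, hγ]
          push_cast at hcon ⊢
          nlinarith [hcon]
        by_contra hpos
        push_neg at hpos
        have ht0 : α ≤ tb := by have := hq 0; simpa using this
        set T := Real.sqrt ((tb - α + 1) / γ) with hT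
        have hTsq : T^2 = (tb - α + 1) / γ :=
          Real.sq_sqrt (div_nonneg (by linarith) hpos.le)
        have h1 := hq T
        have h2 := hq (-T)
        have hTγ : T^2 * γ = tb - α + 1 := by
          rw [hTsq, div_mul_cancel₀ _ (ne_of_gt hpos)]
        nlinarith [h1, h2, hTγ]
      · -- rescale
        set e := τ⁻¹ • e' with he
        have he'2 : e' = τ • e := by
          rw [he, smul_smul, mul_inv_cancel₀ hτ0, one_smul]
        have hns : star τ * τ = ((Complex.normSq τ : ℝ) : ℂ) := by
          rw [show star τ = (starRingEnd ℂ) τ from rfl]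
          exact Complex.normSq_eq_conj_mul_self.symm
        have hnspos : 0 < Complex.normSq τ := Complex.normSq_pos.mpr hτ0
        have hCval : qf C (Sum.elim e' (fun _ : Unit => τ))
            = Complex.normSq τ * ((star e ⬝ᵥ B *ᵥ e).re - 1) := by
          rw [qf, hCeval, he'2, form_smul]
          rw [show star τ * τ * (star e ⬝ᵥ B *ᵥ e) + star τ * τ * (-1)
              = star τ * τ * ((star e ⬝ᵥ B *ᵥ e) - 1) by ring, hns, re_real_mul]
          simp [Complex.sub_re]
        have hAval : qf A (Sum.elim e' (fun _ : Unit => τ))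
            = Complex.normSq τ * ((star (hh + e) ⬝ᵥ W *ᵥ (hh + e)).re - tb) := by
          rw [qf, hAeval, he'2, form_smul]
          rw [show star hh ⬝ᵥ W *ᵥ (τ • e) = τ * (star hh ⬝ᵥ W *ᵥ e) from by
            rw [mulVec_smul, dotProduct_smul]; rfl]
          rw [show star (τ • e) ⬝ᵥ W *ᵥ hh = star τ * (star e ⬝ᵥ W *ᵥ hh) from by
            rw [star_smul, smul_dotProduct]; rfl]
          rw [show star τ * τ * (star e ⬝ᵥ W *ᵥ e) + τ * (star τ * (star e ⬝ᵥ W *ᵥ hh))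
              + star τ * (τ * (star hh ⬝ᵥ W *ᵥ e)) + star τ * τ * (star hh ⬝ᵥ W *ᵥ hh - (tb:ℂ))
              = star τ * τ * ((star hh ⬝ᵥ W *ᵥ hh + star hh ⬝ᵥ W *ᵥ e
                + star e ⬝ᵥ W *ᵥ hh + star e ⬝ᵥ W *ᵥ e) - (tb:ℂ)) by ring]
          rw [← expand_quad, hns, re_real_mul]
          simp [Complex.sub_re]
        rw [hCval] at hx
        rw [hAval]
        have hBle : (star e ⬝ᵥ B *ᵥ e).re ≤ 1 := by nlinarith [hx, hnspos]
        have := H e hBle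
        nlinarith [this, hnspos]
    have hslater : qf C (Sum.elim (0 : Fin N → ℂ) (fun _ : Unit => (1:ℂ))) < 0 := by
      rw [qf, hCeval]
      simp
    obtain ⟨lam, hlam, hineq⟩ := slemma hAH hCH _ hslater H'
    refine ⟨lam, hlam, ?_⟩
    rw [hG lam]
    rw [posSemidef_iff_dotProduct_mulVec]
    constructor
    · rw [Matrix.IsHermitian, Matrix.conjTranspose_add, Matrix.conjTranspose_neg, hAH.eq,
        Matrix.conjTranspose_smul, hCH.eq]
      congr 2
      simp
    · intro x
      have him : ((star x ⬝ᵥ (-A + (lam:ℂ) • C) *ᵥ x)).im = 0 := by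
        rw [← Complex.conj_eq_iff_im]
        apply conj_form
        rw [Matrix.IsHermitian, Matrix.conjTranspose_add, Matrix.conjTranspose_neg, hAH.eq,
          Matrix.conjTranspose_smul, hCH.eq]
        congr 2
        simp
      have hre : 0 ≤ ((star x ⬝ᵥ (-A + (lam:ℂ) • C) *ᵥ x)).re := by
        rw [show ((-A + (lam:ℂ) • C) : Matrix _ _ ℂ) *ᵥ x = -(A *ᵥ x) + (lam:ℂ) • (C *ᵥ x) from by
          rw [add_mulVec, neg_mulVec, smul_mulVec]]
        rw [dotProduct_add, dotProduct_neg, dotProduct_smul]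
        simp only [Complex.add_re, Complex.neg_re, smul_eq_mul, re_real_mul]
        have := hineq x
        rw [qf, qf] at this
        linarith
      rw [Complex.le_def]
      constructor
      · simpa using hre
      · rw [Complex.zero_im]; exact him.symm
  · -- backward direction
    rintro ⟨lam, hlam, hpsd⟩ e he
    rw [hG lam] at hpsd
    have h2 := (posSemidef_iff_dotProduct_mulVec.mp hpsd).2 (Sum.elim e (fun _ : Unit => (1:ℂ)))
    have hre := (Complex.le_def.mp h2).1
    rw [show ((-A + (lam:ℂ) • C) : Matrix _ _ ℂ) *ᵥ _ = -(A *ᵥ (Sum.elim e (fun _ : Unit => (1:ℂ))))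
        + (lam:ℂ) • (C *ᵥ (Sum.elim e (fun _ : Unit => (1:ℂ)))) from by
      rw [add_mulVec, neg_mulVec, smul_mulVec]] at hre
    rw [dotProduct_add, dotProduct_neg, dotProduct_smul] at hre
    have hA1 : (star (Sum.elim e (fun _ : Unit => (1:ℂ))) ⬝ᵥ
        A *ᵥ (Sum.elim e (fun _ : Unit => (1:ℂ)))).re
        = (star (hh + e) ⬝ᵥ W *ᵥ (hh + e)).re - tb := by
      rw [hAeval, expand_quad]
      simp [Complex.add_re, Complex.sub_re]
      ring
    have hC1 : (star (Sum.elim e (fun _ : Unit => (1:ℂ))) ⬝ᵥ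
        C *ᵥ (Sum.elim e (fun _ : Unit => (1:ℂ)))).re
        = (star e ⬝ᵥ B *ᵥ e).re - 1 := by
      rw [hCeval]
      simp
      ring
    simp only [Complex.add_re, Complex.neg_re, smul_eq_mul, re_real_mul, Complex.zero_re] at hre
    rw [hA1, hC1] at hre
    nlinarith [hre, he, hlam]
end

section
/- Let W and B be N×N Hermitian positive semidefinite complex matrices, ĥ ∈ ℂᴺ, and t ∈ ℝ. Then (ĥ+e)ᴴ W (ĥ+e) ≥ t for every e ∈ ℂᴺ with eᴴ B e ≤ 1, if and only if there exists μ ≥ 0 such that the (N+1)×(N+1) Hermitian block matrix [[W + μB, Wĥ], [ĥᴴW, ĥᴴWĥ − t − μ]] is positive semidefinite. -/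
open Matrix ComplexOrder

namespace WCLBAux

variable {N : ℕ}

/-- The quadratic form of a Hermitian matrix is real-valued. -/
lemma im_quad_zero {P : Matrix (Fin N) (Fin N) ℂ} (hP : P.IsHermitian) (x : Fin N → ℂ) :
    (star x ⬝ᵥ P *ᵥ x).im = 0 := by
  rw [← Complex.conj_eq_iff_im]
  calc (starRingEnd ℂ) (star x ⬝ᵥ P *ᵥ x) = star (star x ⬝ᵥ P *ᵥ x) := rfl
    _ = star (P *ᵥ x) ⬝ᵥ star (star x) := (star_dotProduct_star _ _).symm
    _ = star x ⬝ᵥ P *ᵥ x := by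
        rw [star_star, star_mulVec, hP.eq, ← dotProduct_mulVec]

/-- Algebraic expansion identity for quadratic forms along a segment. -/
lemma expand_identity (P : Matrix (Fin N) (Fin N) ℂ) (x y : Fin N → ℂ) (c d : ℝ) :
    star ((c:ℂ) • x + (d:ℂ) • y) ⬝ᵥ P *ᵥ ((c:ℂ) • x + (d:ℂ) • y)
      + ((c*d : ℝ):ℂ) * (star (x - y) ⬝ᵥ P *ᵥ (x - y))
    = ((c*(c+d) : ℝ):ℂ) * (star x ⬝ᵥ P *ᵥ x) + ((d*(c+d) : ℝ):ℂ) * (star y ⬝ᵥ P *ᵥ y) := by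
  push_cast
  simp only [star_add, star_smul, star_sub, mulVec_add, mulVec_smul, mulVec_sub,
    add_dotProduct, dotProduct_add, smul_dotProduct, dotProduct_smul, sub_dotProduct,
    dotProduct_sub, smul_eq_mul, Complex.star_def, Complex.conj_ofReal]
  ring

/-- Convexity of a PSD quadratic form. -/
lemma convex_quad {P : Matrix (Fin N) (Fin N) ℂ} (hP : P.PosSemidef) (x y : Fin N → ℂ)
    {c d : ℝ} (hc : 0 ≤ c) (hd : 0 ≤ d) (hcd : c + d = 1) :
    (star ((c:ℂ) • x + (d:ℂ) • y) ⬝ᵥ P *ᵥ ((c:ℂ) • x + (d:ℂ) • y)).re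
      ≤ c * (star x ⬝ᵥ P *ᵥ x).re + d * (star y ⬝ᵥ P *ᵥ y).re := by
  have h := congrArg Complex.re (expand_identity P x y c d)
  simp only [Complex.add_re, Complex.mul_re, Complex.ofReal_re, Complex.ofReal_im,
    zero_mul, sub_zero] at h
  have h0 : 0 ≤ (star (x - y) ⬝ᵥ P *ᵥ (x - y)).re := hP.re_dotProduct_nonneg _
  rw [hcd] at h
  nlinarith [mul_nonneg (mul_nonneg hc hd) h0]

/-- Scaling of a quadratic form. -/
lemma quad_smul (P : Matrix (Fin N) (Fin N) ℂ) (x : Fin N → ℂ) (z : ℂ) :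
    star (z • x) ⬝ᵥ P *ᵥ (z • x) = (Complex.normSq z : ℂ) * (star x ⬝ᵥ P *ᵥ x) := by
  simp only [star_smul, mulVec_smul, smul_dotProduct, dotProduct_smul, smul_eq_mul,
    Complex.star_def]
  rw [← mul_assoc, Complex.mul_conj]

/-- Quadratic form of a block matrix with a `Unit` block. -/
lemma quad_fromBlocks (A : Matrix (Fin N) (Fin N) ℂ) (u v : Fin N → ℂ) (d : ℂ)
    (e : Fin N → ℂ) (z : ℂ) :
    star (Sum.elim e (fun _ : Unit => z)) ⬝ᵥ
      (Matrix.fromBlocks A (Matrix.of fun i (_ : Unit) => u i)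
        (Matrix.of fun (_ : Unit) j => v j) (Matrix.of fun (_ : Unit) (_ : Unit) => d)) *ᵥ
      (Sum.elim e (fun _ : Unit => z))
    = star e ⬝ᵥ A *ᵥ e + z * (star e ⬝ᵥ u) + star z * (v ⬝ᵥ e) + star z * z * d := by
  have hst : star (Sum.elim e (fun _ : Unit => z)) =
      Sum.elim (star e) (fun _ : Unit => star z) := by
    funext i; cases i <;> rfl
  have h1 : (Matrix.of fun i (_ : Unit) => u i) *ᵥ (fun _ => z) = z • u := by
    funext i; simp [mulVec, dotProduct, mul_comm]
  have h2 : (Matrix.of fun (_ : Unit) j => v j) *ᵥ e = fun _ => v ⬝ᵥ e := by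
    funext i; simp [mulVec, dotProduct]
  have h3 : (Matrix.of fun (_ : Unit) (_ : Unit) => d) *ᵥ (fun _ => z) = fun _ => d * z := by
    funext i; simp [mulVec, dotProduct]
  rw [hst, fromBlocks_mulVec, Sum.elim_comp_inl, Sum.elim_comp_inr, h1, h2, h3,
    sumElim_dotProduct_sumElim, dotProduct_add, dotProduct_smul]
  simp [dotProduct, smul_eq_mul]
  ring

end WCLBAux

open WCLBAux

/-- LMI reformulation, via the complex S-lemma, of a worst-case quadratic lower-bound
constraint over an ellipsoidal uncertainty set. -/
theorem worst_case_lower_bound_iff_LMI {N : ℕ}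
    (W B : Matrix (Fin N) (Fin N) ℂ) (hW : W.PosSemidef) (hB : B.PosSemidef)
    (hh : Fin N → ℂ) (t : ℝ) :
    (∀ e : Fin N → ℂ, (star e ⬝ᵥ B *ᵥ e).re ≤ 1 →
        t ≤ (star (hh + e) ⬝ᵥ W *ᵥ (hh + e)).re) ↔
      (∃ μ : ℝ, 0 ≤ μ ∧
        (Matrix.fromBlocks (W + (μ : ℂ) • B)
            (Matrix.of fun i (_ : Unit) => (W *ᵥ hh) i)
            (Matrix.of fun (_ : Unit) j => (star hh ᵥ* W) j)
            (Matrix.of fun (_ : Unit) (_ : Unit) =>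
              star hh ⬝ᵥ W *ᵥ hh - (t : ℂ) - (μ : ℂ))).PosSemidef) := by
  have hF := fun e : Fin N → ℂ => (star (hh + e) ⬝ᵥ W *ᵥ (hh + e)).re
  set F : (Fin N → ℂ) → ℝ := fun e => (star (hh + e) ⬝ᵥ W *ᵥ (hh + e)).re with hFdef
  set G : (Fin N → ℂ) → ℝ := fun e => (star e ⬝ᵥ B *ᵥ e).re with hGdef
  have hG0 : G 0 = 0 := by simp [hGdef]
  -- the fundamental value identity for the block matrix
  have val_eq : ∀ (μ : ℝ) (e : Fin N → ℂ) (z : ℂ),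
      star (Sum.elim e (fun _ : Unit => z)) ⬝ᵥ
        (Matrix.fromBlocks (W + (μ : ℂ) • B)
            (Matrix.of fun i (_ : Unit) => (W *ᵥ hh) i)
            (Matrix.of fun (_ : Unit) j => (star hh ᵥ* W) j)
            (Matrix.of fun (_ : Unit) (_ : Unit) =>
              star hh ⬝ᵥ W *ᵥ hh - (t : ℂ) - (μ : ℂ))) *ᵥ
        (Sum.elim e (fun _ : Unit => z))
      = star (e + z • hh) ⬝ᵥ W *ᵥ (e + z • hh) + (μ : ℂ) * (star e ⬝ᵥ B *ᵥ e)
        - (Complex.normSq z : ℂ) * ((t : ℂ) + μ) := by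
    intro μ e z
    rw [quad_fromBlocks]
    have hrow : (star hh ᵥ* W) ⬝ᵥ e = star hh ⬝ᵥ W *ᵥ e := (dotProduct_mulVec _ _ _).symm
    have hzz : star z * z = (Complex.normSq z : ℂ) := by
      rw [Complex.star_def, mul_comm, Complex.mul_conj]
    rw [hrow, ← hzz]
    simp only [star_add, star_smul, mulVec_add, mulVec_smul, add_mulVec, smul_mulVec,
      add_dotProduct, dotProduct_add, smul_dotProduct, dotProduct_smul, smul_eq_mul]
    ring
  constructor
  · -- forward direction: construct the multiplier μ
    intro H
    -- cross inequality via convexity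
    have cross : ∀ e₁ e₂ : Fin N → ℂ, 1 < G e₁ → G e₂ < 1 →
        (t - F e₁) / (G e₁ - 1) ≤ (F e₂ - t) / (1 - G e₂) := by
      intro e₁ e₂ h1 h2
      have hs : 0 < G e₁ - G e₂ := by linarith
      set c : ℝ := (1 - G e₂) / (G e₁ - G e₂) with hc
      set d : ℝ := (G e₁ - 1) / (G e₁ - G e₂) with hd
      have hc0 : 0 ≤ c := div_nonneg (by linarith) hs.le
      have hd0 : 0 ≤ d := div_nonneg (by linarith) hs.le
      have hcd : c + d = 1 := by rw [hc, hd]; field_simp; ring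
      set e : Fin N → ℂ := (c:ℂ) • e₁ + (d:ℂ) • e₂ with he
      have hGe : G e ≤ 1 := by
        have hcv := convex_quad hB e₁ e₂ hc0 hd0 hcd
        have hval : c * G e₁ + d * G e₂ = 1 := by rw [hc, hd]; field_simp; ring
        calc G e ≤ c * G e₁ + d * G e₂ := hcv
          _ = 1 := hval
      have hFe : t ≤ F e := (H e hGe : t ≤ F e)
      have hconv : F e ≤ c * F e₁ + d * F e₂ := by
        have hsum : (c:ℂ) • (hh + e₁) + (d:ℂ) • (hh + e₂) = hh + e := by
          have h1' : ((c:ℝ):ℂ) + ((d:ℝ):ℂ) = 1 := by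
            rw [← Complex.ofReal_add, hcd, Complex.ofReal_one]
          simp only [smul_add, he]
          rw [show (c:ℂ) • hh + (c:ℂ) • e₁ + ((d:ℂ) • hh + (d:ℂ) • e₂)
              = ((c:ℂ) + (d:ℂ)) • hh + ((c:ℂ) • e₁ + (d:ℂ) • e₂) by
            rw [add_smul]; abel]
          rw [h1', one_smul]
        have hcv := convex_quad hW (hh + e₁) (hh + e₂) hc0 hd0 hcd
        rw [hsum] at hcv
        exact hcv
      have hkey : t * (G e₁ - G e₂) ≤ (1 - G e₂) * F e₁ + (G e₁ - 1) * F e₂ := by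
        have h := le_trans hFe hconv
        have h' := mul_le_mul_of_nonneg_right h hs.le
        rw [hc, hd] at h'
        have hne : G e₁ - G e₂ ≠ 0 := hs.ne'
        calc t * (G e₁ - G e₂) ≤ ((1 - G e₂) / (G e₁ - G e₂) * F e₁
              + (G e₁ - 1) / (G e₁ - G e₂) * F e₂) * (G e₁ - G e₂) := h'
          _ = (1 - G e₂) * F e₁ + (G e₁ - 1) * F e₂ := by
              field_simp
      rw [div_le_div_iff₀ (by linarith) (by linarith)]
      nlinarith
    -- define μ as the sup of the exterior ratios
    set S : Set ℝ := {r : ℝ | ∃ e : Fin N → ℂ, 1 < G e ∧ r = (t - F e) / (G e - 1)} with hS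
    have hbdd : BddAbove (insert (0:ℝ) S) := by
      refine ⟨max 0 (F 0 - t), ?_⟩
      rintro r (rfl | ⟨e, he1, rfl⟩)
      · exact le_max_left _ _
      · refine le_trans ?_ (le_max_right _ _)
        have hcr := cross e 0 he1 (by rw [hG0]; norm_num)
        rw [hG0] at hcr
        simpa using hcr
    set μ : ℝ := sSup (insert (0:ℝ) S) with hμdef
    have hμ0 : 0 ≤ μ := le_csSup hbdd (Set.mem_insert _ _)
    have key : ∀ e : Fin N → ℂ, t + μ * (1 - G e) ≤ F e := by
      intro e
      rcases lt_trichotomy (G e) 1 with h | h | h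
      · have hub : μ ≤ (F e - t) / (1 - G e) := by
          apply csSup_le (Set.insert_nonempty _ _)
          rintro r (rfl | ⟨e', he', rfl⟩)
          · exact div_nonneg (by have h3 : t ≤ F e := H e h.le; linarith) (by linarith)
          · exact cross e' e he' h
        have h2 := (le_div_iff₀ (by linarith : (0:ℝ) < 1 - G e)).mp hub
        linarith
      · have h2 : t ≤ F e := H e h.le
        rw [h]; linarith
      · have hmem : (t - F e) / (G e - 1) ∈ insert (0:ℝ) S :=
          Set.mem_insert_of_mem _ ⟨e, h, rfl⟩
        have hle : (t - F e) / (G e - 1) ≤ μ := le_csSup hbdd hmem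
        have h2 := (div_le_iff₀ (by linarith : (0:ℝ) < G e - 1)).mp hle
        nlinarith
    refine ⟨μ, hμ0, posSemidef_iff_dotProduct_mulVec.mpr ⟨?_, ?_⟩⟩
    · -- Hermitian
      apply Matrix.IsHermitian.fromBlocks
      · have hBs : ((μ:ℂ) • B).IsHermitian := by
          rw [Matrix.IsHermitian, conjTranspose_smul, hB.1.eq, Complex.star_def,
            Complex.conj_ofReal]
        exact hW.1.add hBs
      · ext j i
        simp only [conjTranspose_apply, Matrix.of_apply]
        have hsw : star (W *ᵥ hh) = star hh ᵥ* W := by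
          rw [star_mulVec, hW.1.eq]
        exact congrFun hsw i
      · ext i j
        simp only [conjTranspose_apply, Matrix.of_apply]
        have him : (starRingEnd ℂ) (star hh ⬝ᵥ W *ᵥ hh) = star hh ⬝ᵥ W *ᵥ hh :=
          Complex.conj_eq_iff_im.mpr (im_quad_zero hW.1 hh)
        simp only [star_sub, Complex.star_def, Complex.conj_ofReal, map_sub, him]
    · -- PSD quadratic condition
      intro x
      have hx : x = Sum.elim (fun i => x (Sum.inl i)) (fun _ : Unit => x (Sum.inr ())) := by
        funext i; rcases i with i | ⟨⟩ <;> rfl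
      rw [hx, val_eq]
      set e : Fin N → ℂ := fun i => x (Sum.inl i) with hedef
      set z : ℂ := x (Sum.inr ()) with hzdef
      rw [Complex.nonneg_iff]
      have himW := im_quad_zero hW.1 (e + z • hh)
      have himB := im_quad_zero hB.1 e
      constructor
      · -- real part nonneg
        simp only [Complex.sub_re, Complex.add_re, Complex.mul_re, Complex.ofReal_re,
          Complex.ofReal_im, Complex.add_im, Complex.ofReal_re, himB, zero_mul, mul_zero,
          sub_zero, add_zero]
        rcases eq_or_ne z 0 with hz | hz
        · simp only [hz, Complex.normSq_zero, zero_smul, add_zero, zero_mul, sub_zero]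
          have h1 := hW.re_dotProduct_nonneg e
          have h2 := hB.re_dotProduct_nonneg e
          positivity
        · have hsplit : e + z • hh = z • (hh + z⁻¹ • e) := by
            rw [smul_add, smul_smul, mul_inv_cancel₀ hz, one_smul, add_comm]
          have hsplit2 : e = z • (z⁻¹ • e) := by
            rw [smul_smul, mul_inv_cancel₀ hz, one_smul]
          rw [hsplit, quad_smul]
          rw [show star e ⬝ᵥ B *ᵥ e = star (z • (z⁻¹ • e)) ⬝ᵥ B *ᵥ (z • (z⁻¹ • e)) by
            rw [← hsplit2]]
          rw [quad_smul]
          simp only [Complex.mul_re, Complex.ofReal_re, Complex.ofReal_im, zero_mul, sub_zero]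
          have hk := key (z⁻¹ • e)
          have hns : 0 ≤ Complex.normSq z := Complex.normSq_nonneg z
          have hGdef' : G (z⁻¹ • e) = (star (z⁻¹ • e) ⬝ᵥ B *ᵥ (z⁻¹ • e)).re := rfl
          have hFdef' : F (z⁻¹ • e) =
            (star (hh + z⁻¹ • e) ⬝ᵥ W *ᵥ (hh + z⁻¹ • e)).re := rfl
          nlinarith [hk, hns]
      · -- imaginary part zero
        simp only [Complex.sub_im, Complex.add_im, Complex.mul_im, Complex.ofReal_im,
          Complex.ofReal_re, himW, himB, mul_zero, zero_mul, add_zero, zero_add, sub_zero,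
          neg_zero]
  · -- backward direction
    rintro ⟨μ, hμ0, hM⟩ e hGe
    have h := hM.dotProduct_mulVec_nonneg (Sum.elim e (fun _ : Unit => (1:ℂ)))
    rw [val_eq μ e 1] at h
    rw [Complex.nonneg_iff] at h
    obtain ⟨hre, -⟩ := h
    simp only [Complex.sub_re, Complex.add_re, Complex.mul_re, Complex.ofReal_re,
      Complex.ofReal_im, Complex.normSq_one, Complex.one_re, Complex.one_im,
      im_quad_zero hB.1 e, mul_zero, zero_mul, sub_zero, one_smul, Complex.ofReal_one,
      one_mul, Complex.add_im] at hre
    have heq : e + hh = hh + e := add_comm _ _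
    rw [heq] at hre
    have hGe' : G e ≤ 1 := hGe
    have hFe : F e = (star (hh + e) ⬝ᵥ W *ᵥ (hh + e)).re := rfl
    have hGe2 : G e = (star e ⬝ᵥ B *ᵥ e).re := rfl
    show t ≤ F e
    nlinarith [hre, hμ0, hGe']
end
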